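/- arXiv:1703.03708 — 12 statements merged into one kernel-verified Lean document; each statement's English description precedes it below -/
import Mathlib

section
/- If x ∈ ℕⁿ is a solution of a₁x₁ + ⋯ + aₙxₙ ≡ 0 (mod m) with x₁ + ⋯ + xₙ ≥ m + 1, then x is decomposable: there exists a solution v with 0 < v < x (coordinatewise). -/
/-- If `x ∈ ℕⁿ` solves `a₁x₁ + ⋯ + aₙxₙ ≡ 0 (mod m)` and `x₁ + ⋯ + xₙ ≥ m + 1`,
then `x` is decomposable: there is a solution `v` with `0 < v < x` coordinatewise. -/
theorem stmt_0 (n m : ℕ) (hm : 2 ≤ m) (a x : Fin n → ℕ)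
    (hx : (∑ i, a i * x i) % m = 0)
    (hsum : m + 1 ≤ ∑ i, x i) :
    ∃ v : Fin n → ℕ, (∑ i, a i * v i) % m = 0 ∧ 0 < v ∧ v < x := by
  classical
  set N := ∑ i, x i with hN
  set y : ℕ → ℕ := fun j => if h : j < n then x ⟨j, h⟩ else 0 with hy
  set P : ℕ → ℕ := fun j => ∑ i ∈ Finset.range j, y i with hP
  set u : ℕ → Fin n → ℕ := fun k i => min (x i) (k - P i.val) with hu
  have hPn : P n = N := by
    rw [hP, hN]
    rw [show (∑ i : Fin n, x i) = ∑ i : Fin n, y i.val from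
      Finset.sum_congr rfl (fun i _ => by simp [hy, i.isLt])]
    exact (Fin.sum_univ_eq_sum_range y n).symm
  have hPmono : Monotone P := by
    intro s t hst
    exact Finset.sum_le_sum_of_subset (Finset.range_subset_range.2 hst)
  -- sum of u k
  have hsum_u : ∀ k, ∑ i, u k i = min k N := by
    intro k
    have h1 : (∑ i, u k i) = ∑ j ∈ Finset.range n, min (y j) (k - P j) := by
      rw [← Fin.sum_univ_eq_sum_range (fun j => min (y j) (k - P j)) n]
      exact Finset.sum_congr rfl (fun i _ => by simp [hu, hy, i.isLt])
    have h2 : ∀ j ∈ Finset.range n,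
        min (y j) (k - P j) = min (P (j+1)) k - min (P j) k := by
      intro j hj
      have : P (j+1) = P j + y j := by simp [hP, Finset.sum_range_succ]
      rw [this]
      omega
    rw [h1, Finset.sum_congr rfl h2,
      Finset.sum_range_tsub (f := fun t => min (P t) k) (fun s t hst => min_le_min (hPmono hst) le_rfl) n,
      hPn]
    simp [hP, min_comm]
  have humono : ∀ {k k' : ℕ}, k ≤ k' → ∀ i, u k i ≤ u k' i := by
    intro k k' hk i
    exact min_le_min le_rfl (Nat.sub_le_sub_right hk _)
  have hux : ∀ k i, u k i ≤ x i := fun k i => min_le_left _ _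
  have hm0 : 0 < m := by omega
  set S : ℕ → ℕ := fun k => ∑ i, a i * u k i with hS
  obtain ⟨t₁, t₂, hne, heq⟩ := Fintype.exists_ne_map_eq_of_card_lt
    (fun t : Fin (m+1) => (⟨S (t.val+1) % m, Nat.mod_lt _ hm0⟩ : Fin m)) (by simp)
  have heq' : S (t₁.val + 1) % m = S (t₂.val + 1) % m := by
    simpa using congrArg Fin.val heq
  set j : ℕ := min t₁.val t₂.val + 1 with hj
  set k : ℕ := max t₁.val t₂.val + 1 with hk
  have hjk : j < k := by
    have : t₁.val ≠ t₂.val := fun h => hne (Fin.ext h)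
    omega
  have hkN : k ≤ N := by
    have := t₁.isLt; have := t₂.isLt
    omega
  have hSjk : S j % m = S k % m := by
    rcases le_total t₁.val t₂.val with h | h
    · rw [hj, hk, min_eq_left h, max_eq_right h]; exact heq'
    · rw [hj, hk, min_eq_right h, max_eq_left h]; exact heq'.symm
  refine ⟨fun i => u k i - u j i, ?_, ?_, ?_⟩
  · -- congruence
    have hle : ∀ i ∈ Finset.univ, a i * u j i ≤ a i * u k i :=
      fun i _ => Nat.mul_le_mul_left _ (humono hjk.le i)
    have hdist : (∑ i, a i * (u k i - u j i)) = S k - S j := by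
      rw [show (∑ i, a i * (u k i - u j i)) = ∑ i, (a i * u k i - a i * u j i) from
        Finset.sum_congr rfl (fun i _ => mul_tsub _ _ _)]
      exact Finset.sum_tsub_distrib _ hle
    rw [hdist]
    have hSle : S j ≤ S k := Finset.sum_le_sum hle
    have hdvd : m ∣ S k - S j := (Nat.modEq_iff_dvd' hSle).mp hSjk
    obtain ⟨q, hq⟩ := hdvd
    rw [hq, Nat.mul_mod_right]
  · -- 0 < v
    have hsv : (∑ i, (u k i - u j i)) = k - j := by
      rw [Finset.sum_tsub_distrib _ (fun i _ => humono hjk.le i), hsum_u, hsum_u,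
        min_eq_left hkN, min_eq_left (le_trans hjk.le hkN)]
    refine lt_of_le_of_ne (fun i => Nat.zero_le _) (fun h => ?_)
    have : (∑ i, (u k i - u j i)) = 0 := by
      rw [← h]; simp
    omega
  · -- v < x
    have h1N : (1 : ℕ) ≤ N := by omega
    have hj1 : (1 : ℕ) ≤ j := by omega
    have hsj : (∑ i, u j i) = j := by rw [hsum_u, min_eq_left (le_trans hjk.le hkN)]
    have : ∃ i0, 1 ≤ u j i0 := by
      by_contra h
      push_neg at h
      have : (∑ i, u j i) = 0 := Finset.sum_eq_zero (fun i _ => by have := h i; omega)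
      omega
    obtain ⟨i0, hi0⟩ := this
    refine lt_of_le_of_ne (fun i => le_trans (Nat.sub_le _ _) (hux k i)) (fun h => ?_)
    have h1 : u k i0 - u j i0 = x i0 := congrFun h i0
    have h2 := hux k i0
    have h3 := humono hjk.le i0
    generalize u k i0 = A at h1 h2 h3
    generalize u j i0 = B at h1 hi0 h3
    omega
end

section
/- Every indecomposable solution x ∈ ℕⁿ of a₁x₁ + ⋯ + aₙxₙ ≡ 0 (mod m) satisfies x₁ + ⋯ + xₙ ≤ m. -/
lemma aux_Iio_succ (n : ℕ) (x : Fin (n+1) → ℕ) (i : Fin n) :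
    ∑ j ∈ Finset.Iio (Fin.succ i), x j = x 0 + ∑ j ∈ Finset.Iio i, x (Fin.succ j) := by
  have he : Finset.Iio (Fin.succ i)
      = insert (0 : Fin (n+1)) ((Finset.Iio i).map ⟨Fin.succ, Fin.succ_injective n⟩) := by
    ext j
    simp only [Finset.mem_Iio, Finset.mem_insert, Finset.mem_map, Function.Embedding.coeFn_mk]
    constructor
    · intro hj
      rcases Fin.eq_zero_or_eq_succ j with h | ⟨k, rfl⟩
      · exact Or.inl h
      · exact Or.inr ⟨k, by simpa [Fin.succ_lt_succ_iff] using hj, rfl⟩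
    · rintro (rfl | ⟨k, hk, rfl⟩)
      · exact Fin.succ_pos i
      · exact Fin.succ_lt_succ_iff.mpr hk
  rw [he, Finset.sum_insert (by simp [Fin.succ_ne_zero]), Finset.sum_map]
  rfl

lemma sum_min_prefix : ∀ (n : ℕ) (x : Fin n → ℕ) (t : ℕ),
    ∑ i : Fin n, min (x i) (t - ∑ j ∈ Finset.Iio i, x j) = min t (∑ i, x i) := by
  intro n
  induction n with
  | zero => intro x t; simp
  | succ n ih =>
    intro x t
    rw [Fin.sum_univ_succ, Fin.sum_univ_succ]
    have h0 : ∑ j ∈ Finset.Iio (0 : Fin (n+1)), x j = 0 := by simp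
    rw [h0]
    simp only [aux_Iio_succ]
    have h2 : ∀ i : Fin n, t - (x 0 + ∑ j ∈ Finset.Iio i, x (Fin.succ j))
        = (t - x 0) - ∑ j ∈ Finset.Iio i, x (Fin.succ j) := by
      intro i; omega
    simp only [h2]
    rw [ih (fun i => x i.succ) (t - x 0)]
    rcases le_total t (x 0) with h | h <;> simp <;> omega

/-- Every indecomposable solution of `a₁x₁ + ⋯ + aₙxₙ ≡ 0 (mod m)` satisfies
`x₁ + ⋯ + xₙ ≤ m`. -/
theorem stmt_1 (n m : ℕ) (hm : 2 ≤ m) (a x : Fin n → ℕ)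
    (hx : (∑ i, a i * x i) % m = 0) (hx0 : x ≠ 0)
    (hmin : ∀ y : Fin n → ℕ, (∑ i, a i * y i) % m = 0 → y ≠ 0 → y ≤ x → y = x) :
    ∑ i, x i ≤ m := by
  by_contra hcon
  push_neg at hcon
  -- the "prefix" vectors
  set v : ℕ → Fin n → ℕ := fun t i => min (x i) (t - ∑ j ∈ Finset.Iio i, x j) with hv
  have hsumv : ∀ t, ∑ i, v t i = min t (∑ i, x i) := fun t => sum_min_prefix n x t
  set g : ℕ → ℕ := fun t => ∑ i, a i * v t i with hg
  have hmpos : 0 < m := by omega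
  -- pigeonhole on t ↦ g t % m for t = 0..m
  obtain ⟨p, q, hne, heq⟩ := Fintype.exists_ne_map_eq_of_card_lt
    (fun t : Fin (m+1) => (⟨g t % m, Nat.mod_lt _ hmpos⟩ : Fin m)) (by simp)
  have heq' : g p % m = g q % m := by simpa using congrArg Fin.val heq
  have hne' : (p : ℕ) ≠ (q : ℕ) := fun h => hne (Fin.val_injective h)
  -- wlog p < q
  wlog hpq : (p : ℕ) < (q : ℕ) generalizing p q
  · exact this q p hne.symm heq.symm heq'.symm hne'.symm (by omega)
  -- monotonicity of v
  have hmono : ∀ i, v p.val i ≤ v q.val i := by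
    intro i; simp only [hv]; omega
  have hmonoa : ∀ i ∈ Finset.univ, a i * v p.val i ≤ a i * v q.val i :=
    fun i _ => Nat.mul_le_mul_left _ (hmono i)
  -- the smaller solution
  set y : Fin n → ℕ := fun i => v q.val i - v p.val i with hy
  have hysum : ∑ i, y i = q.val - p.val := by
    simp only [hy]
    rw [Finset.sum_tsub_distrib Finset.univ (fun i _ => hmono i), hsumv, hsumv]
    have hq : q.val ≤ m := Nat.lt_succ_iff.mp q.isLt
    omega
  have hay : ∑ i, a i * y i = g q.val - g p.val := by
    simp only [hy, Nat.mul_sub]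
    exact Finset.sum_tsub_distrib Finset.univ hmonoa
  have hgle : g p.val ≤ g q.val := Finset.sum_le_sum hmonoa
  have hmod : (∑ i, a i * y i) % m = 0 := by
    rw [hay]
    exact Nat.sub_mod_eq_zero_of_mod_eq heq'.symm
  have hy0 : y ≠ 0 := by
    intro h0
    have : ∑ i, y i = 0 := by rw [h0]; simp
    omega
  have hyx : y ≤ x := by
    intro i
    have : v q.val i ≤ x i := min_le_left _ _
    simp only [hy]; omega
  have := hmin y hmod hy0 hyx
  have hsx : ∑ i, y i = ∑ i, x i := by rw [this]
  have hq : q.val ≤ m := Nat.lt_succ_iff.mp q.isLt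
  omega
end

section
/- Let Ω ⊆ ℤⁿ be a subgroup (lattice) of index at most m, and let r₁,…,rₙ ∈ ℕ with r₁ + ⋯ + rₙ = m. Then the box {x ∈ ℤⁿ : 0 ≤ xᵢ ≤ rᵢ for all i} contains a nonzero element of Ω. -/
/-- If `Ω ≤ ℤⁿ` has index at most `m` and `r₁ + ⋯ + rₙ = m` with `rᵢ ∈ ℕ`, then the box
`{x : 0 ≤ xᵢ ≤ rᵢ}` contains a nonzero element of `Ω`. -/
theorem stmt_2 (n m : ℕ) (hm : 2 ≤ m) (Ω : AddSubgroup (Fin n → ℤ))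
    (hidx : Nat.card ((Fin n → ℤ) ⧸ Ω) ≤ m) (hfin : Nat.card ((Fin n → ℤ) ⧸ Ω) ≠ 0)
    (r : Fin n → ℕ) (hr : ∑ i, r i = m) :
    ∃ x : Fin n → ℤ, x ∈ Ω ∧ x ≠ 0 ∧ ∀ i, 0 ≤ x i ∧ x i ≤ (r i : ℤ) := by
  have hfinite : Finite ((Fin n → ℤ) ⧸ Ω) := (Nat.card_ne_zero.mp hfin).2
  have : Fintype ((Fin n → ℤ) ⧸ Ω) := Fintype.ofFinite _
  -- extend r to ℕ
  set r' : ℕ → ℕ := fun j => if h : j < n then r ⟨j, h⟩ else 0 with hr'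
  set S : ℕ → ℕ := fun i => ∑ j ∈ Finset.range i, r' j with hS
  have hSmono : Monotone S := by
    intro a b hab
    exact Finset.sum_le_sum_of_subset (Finset.range_subset_range.mpr hab)
  have hSn : S n = m := by
    show ∑ j ∈ Finset.range n, r' j = m
    rw [← hr, ← Fin.sum_univ_eq_sum_range]
    apply Finset.sum_congr rfl
    intro i _
    simp [hr']
  -- the staircase points
  set g : ℕ → Fin n → ℕ := fun k i => min (r i) (k - S i.val) with hg
  have hterm : ∀ (k : ℕ) (i : Fin n), g k i = min k (S (i.val + 1)) - min k (S i.val) := by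
    intro k i
    have h2 : S (i.val + 1) = S i.val + r i := by
      show ∑ j ∈ Finset.range (i.val + 1), r' j = S i.val + r i
      rw [Finset.sum_range_succ]
      simp [hr', i.isLt]
      rfl
    show min (r i) (k - S i.val) = min k (S (i.val + 1)) - min k (S i.val)
    rw [h2]
    omega
  have hsum : ∀ k : ℕ, ∑ i, g k i = min k m := by
    intro k
    have := Finset.sum_range_tsub (f := fun i => min k (S i)) (fun a b hab => min_le_min le_rfl (hSmono hab)) n
    rw [show (∑ i, g k i) = ∑ i ∈ Finset.range n, (min k (S (i + 1)) - min k (S i)) from ?_]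
    · rw [this, hSn, hS]
      simp
    · rw [← Fin.sum_univ_eq_sum_range]
      exact Finset.sum_congr rfl fun i _ => hterm k i
  -- pigeonhole
  set F : Fin (m + 1) → (Fin n → ℤ) ⧸ Ω :=
    fun k => QuotientAddGroup.mk (fun i => ((g k.val i : ℕ) : ℤ)) with hF
  have hcard : Fintype.card ((Fin n → ℤ) ⧸ Ω) < Fintype.card (Fin (m + 1)) := by
    rw [Fintype.card_fin, ← Nat.card_eq_fintype_card]
    omega
  obtain ⟨a, b, hab, heq⟩ := Fintype.exists_ne_map_eq_of_card_lt F hcard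
  -- wlog a < b
  wlog hlt : a < b generalizing a b
  · exact this b a hab.symm heq.symm (by omega)
  have hmem : (fun i => ((g b.val i : ℕ) : ℤ)) - (fun i => ((g a.val i : ℕ) : ℤ)) ∈ Ω := by
    rw [hF] at heq
    have := QuotientAddGroup.eq.mp heq
    simpa [sub_eq_neg_add] using this
  refine ⟨_, hmem, ?_, ?_⟩
  · intro hzero
    have hz : ∀ i, g b.val i = g a.val i := by
      intro i
      have := congrFun hzero i
      simp only [Pi.sub_apply, Pi.zero_apply, sub_eq_zero] at this
      exact_mod_cast this
    have : ∑ i, g b.val i = ∑ i, g a.val i := Finset.sum_congr rfl fun i _ => hz i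
    rw [hsum, hsum] at this
    have ha : a.val < m + 1 := a.isLt
    have hb : b.val < m + 1 := b.isLt
    have : a = b := by
      apply Fin.ext
      omega
    exact hab this
  · intro i
    have hmono : g a.val i ≤ g b.val i := by
      rw [hg]
      have : a.val - S i.val ≤ b.val - S i.val := by omega
      exact min_le_min le_rfl this
    have hub : g b.val i ≤ r i := min_le_left _ _
    constructor
    · show (0:ℤ) ≤ ((g b.val i : ℕ) : ℤ) - ((g a.val i : ℕ) : ℤ)
      omega
    · show ((g b.val i : ℕ) : ℤ) - ((g a.val i : ℕ) : ℤ) ≤ (r i : ℤ)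
      omega
end

section
/- For m ≥ 2 and a ∈ ℕⁿ, the number of indecomposable solutions of a₁x₁ + ⋯ + aₙxₙ ≡ 0 (mod m) is at most C(n+m−1, m), the binomial coefficient. -/
open Classical in
/-- Auxiliary chain: starting from 0, add one unit at a coordinate still below `x`. -/
private noncomputable def chainAux {n : ℕ} (x : Fin n → ℕ) : ℕ → (Fin n → ℕ)
  | 0 => 0
  | j + 1 =>
    let y := chainAux x j
    if h : ∃ i, y i < x i then y + Pi.single h.choose 1 else y

private lemma chainAux_step {n : ℕ} (x : Fin n → ℕ) (j : ℕ) :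
    chainAux x j ≤ chainAux x (j + 1) := by
  rw [chainAux]
  split
  · intro i; simp only [Pi.add_apply]; exact Nat.le_add_right _ _
  · exact le_rfl

private lemma chainAux_spec {n : ℕ} (x : Fin n → ℕ) :
    ∀ j, j ≤ ∑ i, x i → chainAux x j ≤ x ∧ ∑ i, chainAux x j i = j := by
  intro j
  induction j with
  | zero => intro _; exact ⟨fun i => Nat.zero_le _, by simp [chainAux]⟩
  | succ j ih =>
    intro hj
    obtain ⟨h1, h2⟩ := ih (by omega)
    have hex : ∃ i, chainAux x j i < x i := by
      by_contra hno
      push_neg at hno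
      have : ∑ i, x i ≤ j := h2 ▸ Finset.sum_le_sum (fun i _ => hno i)
      omega
    rw [chainAux]
    rw [dif_pos hex]
    constructor
    · intro i
      simp only [Pi.add_apply]
      by_cases hi : i = hex.choose
      · subst hi
        have := hex.choose_spec
        simp only [Pi.single_eq_same]
        omega
      · rw [Pi.single_eq_of_ne hi]
        simpa using h1 i
    · simp only [Pi.add_apply]
      rw [Finset.sum_add_distrib, h2]
      simp

private lemma chainAux_mono {n : ℕ} (x : Fin n → ℕ) : Monotone (chainAux x) :=
  monotone_nat_of_le_succ (chainAux_step x)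

private lemma sum_le_of_indec (n m : ℕ) (hm : 2 ≤ m) (a x : Fin n → ℕ)
    (hx : (∑ i, a i * x i) % m = 0)
    (hmin : ∀ y : Fin n → ℕ, (∑ i, a i * y i) % m = 0 → y ≠ 0 → y ≤ x → y = x) :
    ∑ i, x i ≤ m := by
  by_contra h
  push_neg at h
  have hc := chainAux_spec x
  have hmono := chainAux_mono x
  haveI : NeZero m := ⟨by omega⟩
  have hcard : Fintype.card (ZMod m) < Fintype.card (Fin (m+1)) := by
    simp [ZMod.card]
  obtain ⟨j, k, hjk, heq⟩ := Fintype.exists_ne_map_eq_of_card_lt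
    (fun j : Fin (m+1) => ((∑ i, a i * chainAux x j i : ℕ) : ZMod m)) hcard
  have key : ∀ j k : Fin (m+1), (j : ℕ) < (k : ℕ) →
      ((∑ i, a i * chainAux x j i : ℕ) : ZMod m) = ((∑ i, a i * chainAux x k i : ℕ) : ZMod m) → False := by
    intro j k hlt heq2
    obtain ⟨hjx, hjs⟩ := hc j (by have := j.isLt; omega)
    obtain ⟨hkx, hks⟩ := hc k (by have := k.isLt; omega)
    have hle : chainAux x (j : ℕ) ≤ chainAux x (k : ℕ) := hmono (le_of_lt hlt)
    set y : Fin n → ℕ := fun i => chainAux x (k : ℕ) i - chainAux x (j : ℕ) i with hy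
    have hsumy : ∑ i, y i + ∑ i, chainAux x (j : ℕ) i = ∑ i, chainAux x (k : ℕ) i := by
      rw [← Finset.sum_add_distrib]
      exact Finset.sum_congr rfl (fun i _ => Nat.sub_add_cancel (hle i))
    have hsumay : ∑ i, a i * y i + ∑ i, a i * chainAux x (j : ℕ) i = ∑ i, a i * chainAux x (k : ℕ) i := by
      rw [← Finset.sum_add_distrib]
      exact Finset.sum_congr rfl (fun i _ => by
        rw [← Nat.mul_add, Nat.sub_add_cancel (hle i)])
    have hmod : (∑ i, a i * y i) % m = 0 := by
      have hcast : ((∑ i, a i * y i : ℕ) : ZMod m) = 0 := by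
        have h1 := congrArg (fun t : ℕ => (t : ZMod m)) hsumay
        simp only [Nat.cast_add] at h1
        rw [heq2] at h1
        exact add_right_cancel (h1.trans (zero_add _).symm)
      have hdvd : m ∣ ∑ i, a i * y i := (ZMod.natCast_eq_zero_iff _ _).mp hcast
      omega
    have hy0 : y ≠ 0 := by
      intro h0
      rw [h0] at hsumy
      simp only [Pi.zero_apply, Finset.sum_const_zero, zero_add] at hsumy
      rw [hjs, hks] at hsumy
      omega
    have hyx : y ≤ x := fun i => le_trans (Nat.sub_le _ _) (hkx i)
    have heqx := hmin y hmod hy0 hyx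
    have hsy : ∑ i, y i = (k : ℕ) - (j : ℕ) := by omega
    have hxval : ∑ i, x i = (k : ℕ) - (j : ℕ) := by rw [← heqx]; exact hsy
    have hkle : (k : ℕ) ≤ m := Nat.lt_succ_iff.mp k.isLt
    omega
  rcases Fin.lt_or_lt_of_ne hjk with hlt | hlt
  · exact key j k hlt heq
  · exact key k j hlt heq.symm

private lemma multiset_card_sum {n : ℕ} (f : Fin n → Multiset (Fin n)) :
    Multiset.card (∑ i, f i) = ∑ i, Multiset.card (f i) := by
  induction (Finset.univ : Finset (Fin n)) using Finset.cons_induction with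
  | empty => simp
  | cons a s ha ih => simp [Finset.sum_cons, ih]

/-- The number of indecomposable solutions of `a₁x₁ + ⋯ + aₙxₙ ≡ 0 (mod m)`
is at most `C(n+m−1, m)`. -/
theorem stmt_3 (n m : ℕ) (hm : 2 ≤ m) (a : Fin n → ℕ) :
    {x : Fin n → ℕ | (∑ i, a i * x i) % m = 0 ∧ x ≠ 0 ∧
      ∀ y : Fin n → ℕ, (∑ i, a i * y i) % m = 0 → y ≠ 0 → y ≤ x → y = x}.ncard
      ≤ Nat.choose (n + m - 1) m := by
  classical
  cases n with
  | zero =>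
    have hempty : {x : Fin 0 → ℕ | (∑ i, a i * x i) % m = 0 ∧ x ≠ 0 ∧
        ∀ y : Fin 0 → ℕ, (∑ i, a i * y i) % m = 0 → y ≠ 0 → y ≤ x → y = x} = ∅ := by
      ext x
      simp only [Set.mem_setOf_eq, Set.mem_empty_iff_false, iff_false, not_and]
      intro _ hx0
      exact absurd (Subsingleton.elim x 0) hx0
    rw [hempty, Set.ncard_empty]
    exact Nat.zero_le _
  | succ k =>
    set S := {x : Fin (k+1) → ℕ | (∑ i, a i * x i) % m = 0 ∧ x ≠ 0 ∧
        ∀ y : Fin (k+1) → ℕ, (∑ i, a i * y i) % m = 0 → y ≠ 0 → y ≤ x → y = x} with hS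
    set f : (Fin (k+1) → ℕ) → (Fin (k+1) → ℕ) :=
      fun x => Function.update x (Fin.last k) (m - ∑ i : Fin k, x i.castSucc) with hf
    have hsumle : ∀ x ∈ S, ∑ i, x i ≤ m := fun x hx =>
      sum_le_of_indec (k+1) m hm a x hx.1 hx.2.2
    have hinj : Set.InjOn f S := by
      intro x hx x' hx' hfeq
      have hne : ∀ i : Fin (k+1), i ≠ Fin.last k → x i = x' i := by
        intro i hi
        have := congrFun hfeq i
        simpa [hf, Function.update_of_ne hi] using this
      rcases le_total (x (Fin.last k)) (x' (Fin.last k)) with hle | hle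
      · have hxx' : x ≤ x' := by
          intro i
          by_cases hi : i = Fin.last k
          · subst hi; exact hle
          · exact le_of_eq (hne i hi)
        exact hx'.2.2 x hx.1 hx.2.1 hxx'
      · have hxx' : x' ≤ x := by
          intro i
          by_cases hi : i = Fin.last k
          · subst hi; exact hle
          · exact le_of_eq (hne i hi).symm
        exact (hx.2.2 x' hx'.1 hx'.2.1 hxx').symm
    have hfsum : ∀ x ∈ S, ∑ i, f x i = m := by
      intro x hx
      have hpre : ∑ i : Fin k, x i.castSucc ≤ m := by
        have h1 : ∑ i : Fin k, x i.castSucc ≤ ∑ i, x i := by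
          rw [Fin.sum_univ_castSucc]
          exact Nat.le_add_right _ _
        exact le_trans h1 (hsumle x hx)
      rw [Fin.sum_univ_castSucc]
      have h1 : ∀ i : Fin k, f x i.castSucc = x i.castSucc := fun i => by
        simp [hf, Function.update_of_ne (Fin.castSucc_lt_last i).ne]
      have h2 : f x (Fin.last k) = m - ∑ i : Fin k, x i.castSucc := by simp [hf]
      rw [h2, Finset.sum_congr rfl (fun i _ => h1 i)]
      omega
    -- map into Sym (Fin (k+1)) m
    set g : (Fin (k+1) → ℕ) → Multiset (Fin (k+1)) :=
      fun x => ∑ i, Multiset.replicate (x i) i with hg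
    have hgcount : ∀ (x : Fin (k+1) → ℕ) (i : Fin (k+1)), (g x).count i = x i := by
      intro x i
      rw [hg]
      dsimp only
      rw [Multiset.count_sum']
      rw [Finset.sum_eq_single i]
      · simp [Multiset.count_replicate]
      · intro b _ hb
        simp [Multiset.count_replicate, hb]
      · simp
    have hgcard : ∀ x : Fin (k+1) → ℕ, Multiset.card (g x) = ∑ i, x i := by
      intro x
      rw [hg]
      dsimp only
      rw [multiset_card_sum]
      simp
    set F : (Fin (k+1) → ℕ) → Sym (Fin (k+1)) m := fun x =>
      if h : Multiset.card (g (f x)) = m then ⟨g (f x), h⟩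
      else Sym.replicate m ⟨0, by omega⟩ with hF
    have hFinj : Set.InjOn F S := by
      intro x hx x' hx' hFeq
      have hcx : Multiset.card (g (f x)) = m := by rw [hgcard, hfsum x hx]
      have hcx' : Multiset.card (g (f x')) = m := by rw [hgcard, hfsum x' hx']
      rw [hF] at hFeq
      simp only [dif_pos hcx, dif_pos hcx'] at hFeq
      have hgeq : g (f x) = g (f x') := by
        have := congrArg Sym.toMultiset hFeq
        simpa [hcx, hcx'] using this
      have hfeq : f x = f x' := by
        funext i
        rw [← hgcount (f x) i, ← hgcount (f x') i, hgeq]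
      exact hinj hx hx' hfeq
    have h1 : S.ncard = (F '' S).ncard := (Set.ncard_image_of_injOn hFinj).symm
    have h2 : (F '' S).ncard ≤ Fintype.card (Sym (Fin (k+1)) m) := by
      rw [← Nat.card_eq_fintype_card, ← Set.ncard_univ]
      exact Set.ncard_le_ncard (Set.subset_univ _) Set.finite_univ
    have h3 : Fintype.card (Sym (Fin (k+1)) m) = Nat.choose (k + 1 + m - 1) m := by
      rw [Sym.card_sym_eq_choose, Fintype.card_fin]
    omega
end

section
/- Let m ≥ 4 and let x ∈ ℕ^{m−1} be an indecomposable solution of the standard linear congruence 1·x₁ + 2·x₂ + ⋯ + (m−1)·x_{m−1} ≡ 0 (mod m). If the support of x has at least s elements, then x₁ + ⋯ + x_{m−1} ≤ m − s + 1. -/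
open Finset

namespace Stmt6Aux

/-- The weighted sum of a vector, in `ZMod m`. -/
def SS (m : ℕ) (y : Fin (m-1) → ℕ) : ZMod m :=
  ((∑ i : Fin (m-1), ((i:ℕ)+1) * y i : ℕ) : ZMod m)

/-- The value associated to an index. -/
def vv (m : ℕ) (j : Fin (m-1)) : ZMod m := ((((j:ℕ)+1 : ℕ)) : ZMod m)

lemma SS_add (m : ℕ) (y z : Fin (m-1) → ℕ) : SS m (y + z) = SS m y + SS m z := by
  unfold SS
  simp only [Pi.add_apply, mul_add, Finset.sum_add_distrib, Nat.cast_add]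

lemma sub_add_eq (k : ℕ) (y z : Fin k → ℕ) (h : z ≤ y) : (y - z) + z = y :=
  funext fun i => by have hi : z i ≤ y i := h i; simp only [Pi.add_apply, Pi.sub_apply]; omega

lemma SS_sub (m : ℕ) (y z : Fin (m-1) → ℕ) (h : z ≤ y) :
    SS m (y - z) = SS m y - SS m z := by
  have h2 := SS_add m (y - z) z
  rw [sub_add_eq (m-1) y z h] at h2
  rw [h2]; ring

lemma SS_single (m : ℕ) (j : Fin (m-1)) : SS m (Pi.single j 1) = vv m j := by
  unfold SS vv
  congr 1
  rw [Finset.sum_eq_single j]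
  · simp
  · intro i _ hij
    rw [Pi.single_eq_of_ne hij, mul_zero]
  · intro h; exact absurd (Finset.mem_univ j) h

lemma sum_sub_add (k : ℕ) (y z : Fin k → ℕ) (h : z ≤ y) :
    (∑ i, (y - z) i) + ∑ i, z i = ∑ i, y i := by
  rw [← Finset.sum_add_distrib]
  exact Finset.sum_congr rfl fun i _ => by have hi : z i ≤ y i := h i; simp only [Pi.sub_apply]; omega

lemma ne_zero_of_sum (k : ℕ) (z : Fin k → ℕ) (h : ∑ i, z i ≠ 0) : z ≠ 0 := by
  rintro rfl; simp at h

lemma vv_val (m : ℕ) [NeZero m] (j : Fin (m-1)) : (vv m j).val = (j:ℕ)+1 := by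
  have hm : m ≠ 0 := NeZero.ne m
  have hj := j.2
  exact ZMod.val_cast_of_lt (by omega)

lemma vv_ne_zero (m : ℕ) [NeZero m] (j : Fin (m-1)) : vv m j ≠ 0 := by
  intro h
  have := vv_val m j
  rw [h, ZMod.val_zero] at this
  omega

lemma vv_inj (m : ℕ) [NeZero m] {i j : Fin (m-1)} (h : vv m i = vv m j) : i = j := by
  have h1 := vv_val m i
  rw [h, vv_val m j] at h1
  exact Fin.ext (by omega)

lemma two_torsion (m : ℕ) [NeZero m] (u : ZMod m) (h : u + u = 0) :
    u = 0 ∨ u = ((m/2 : ℕ) : ZMod m) := by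
  have hval : ((u.val + u.val : ℕ) : ZMod m) = 0 := by
    push_cast
    rw [ZMod.natCast_zmod_val]
    exact h
  have hdvd : m ∣ u.val + u.val := (ZMod.natCast_eq_zero_iff _ _).1 hval
  have hlt : u.val < m := ZMod.val_lt u
  obtain ⟨c, hc⟩ := hdvd
  have hc2 : c ≤ 1 := by
    by_contra hc2
    have : m * 2 ≤ m * c := Nat.mul_le_mul_left m (by omega)
    have hm : m ≠ 0 := NeZero.ne m
    omega
  have : u.val = 0 ∨ u.val = m / 2 := by
    interval_cases c <;> omega
  rcases this with h1 | h1
  · left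
    rw [← ZMod.natCast_zmod_val u, h1, Nat.cast_zero]
  · right
    rw [← ZMod.natCast_zmod_val u, h1]

/-- The set of all subsums of `y`. -/
def subSums (m : ℕ) (y : Fin (m-1) → ℕ) : Finset (ZMod m) :=
  (Fintype.piFinset fun i => Finset.range (y i + 1)).image (SS m)

lemma mem_subSums (m : ℕ) {y : Fin (m-1) → ℕ} {t : ZMod m} :
    t ∈ subSums m y ↔ ∃ z, z ≤ y ∧ SS m z = t := by
  unfold subSums
  simp only [Finset.mem_image, Fintype.mem_piFinset, Finset.mem_range]
  constructor
  · rintro ⟨z, hz, rfl⟩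
    refine ⟨z, Pi.le_def.mpr fun i => ?_, rfl⟩
    have hi := hz i
    omega
  · rintro ⟨z, hz, rfl⟩
    refine ⟨z, fun i => ?_, rfl⟩
    have hi := Pi.le_def.mp hz i
    omega

lemma zero_mem_subSums (m : ℕ) (y : Fin (m-1) → ℕ) : (0 : ZMod m) ∈ subSums m y :=
  (mem_subSums m).2 ⟨0, fun i => Nat.zero_le _, by unfold SS; simp⟩

lemma sq_sum (k : ℕ) (y : Fin k → ℕ) (h : ∀ i, y i ≤ 1) :
    ∑ i, y i = (Finset.univ.filter (fun i => y i ≠ 0)).card := by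
  rw [Finset.card_filter]
  refine Finset.sum_congr rfl fun i _ => ?_
  have hi := h i
  by_cases hy : y i = 0
  · simp [hy]
  · rw [if_pos hy]; omega

lemma ne_of_sum_ne (k : ℕ) (z y : Fin k → ℕ) (h : ∑ i, z i ≠ ∑ i, y i) : z ≠ y :=
  fun heq => h (by rw [heq])

lemma sub_le_self' (k : ℕ) (y z : Fin k → ℕ) : y - z ≤ y :=
  Pi.le_def.mpr fun i => by simp only [Pi.sub_apply]; omega

lemma single_le (k : ℕ) (y : Fin k → ℕ) (j : Fin k) (hj : 1 ≤ y j) :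
    Pi.single j 1 ≤ y := by
  refine Pi.le_def.mpr fun i => ?_
  by_cases hij : i = j
  · subst hij; rw [Pi.single_eq_same]; omega
  · rw [Pi.single_eq_of_ne hij]; omega

lemma sum_single (k : ℕ) (j : Fin k) : ∑ i, Pi.single j (1:ℕ) i = 1 :=
  Fintype.sum_pi_single' j 1

lemma subSums_mono (m : ℕ) {y y' : Fin (m-1) → ℕ} (h : y' ≤ y) :
    subSums m y' ⊆ subSums m y := by
  intro t ht
  obtain ⟨z, hz, rfl⟩ := (mem_subSums m).1 ht
  exact (mem_subSums m).2 ⟨z, le_trans hz h, rfl⟩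

lemma mul_mem_of_closed (m : ℕ) (X : Finset (ZMod m)) (a : ZMod m) (h0 : (0:ZMod m) ∈ X)
    (hcl : ∀ w ∈ X, w + a ∈ X) : ∀ c : ℕ, (c : ZMod m) * a ∈ X := by
  intro c
  induction c with
  | zero => simpa using h0
  | succ nn ih =>
    have : ((nn + 1 : ℕ) : ZMod m) * a = (nn : ZMod m) * a + a := by push_cast; ring
    rw [this]
    exact hcl _ ih

lemma neg_mem_of_closed (m : ℕ) [NeZero m] (X : Finset (ZMod m)) (a : ZMod m)
    (h0 : (0:ZMod m) ∈ X) (hcl : ∀ w ∈ X, w + a ∈ X) : -a ∈ X := by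
  have h := mul_mem_of_closed m X a h0 hcl (m - 1)
  have h1 : (1:ℕ) ≤ m := Nat.one_le_iff_ne_zero.2 (NeZero.ne m)
  have hm : ((m - 1 : ℕ) : ZMod m) = -1 := by
    rw [Nat.cast_sub h1, Nat.cast_one, ZMod.natCast_self]
    ring
  rw [hm] at h
  simpa using h

lemma add_single_le (m : ℕ) {y z : Fin (m-1) → ℕ} {j : Fin (m-1)} (hj : 1 ≤ y j)
    (hzle : z ≤ Function.update y j (y j - 1)) : z + Pi.single j 1 ≤ y := by
  refine Pi.le_def.mpr fun i => ?_
  have h1 := Pi.le_def.mp hzle i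
  by_cases hij : i = j
  · subst hij
    rw [Function.update_self] at h1
    simp only [Pi.add_apply, Pi.single_eq_same]
    omega
  · rw [Function.update_of_ne hij] at h1
    simp only [Pi.add_apply, Pi.single_eq_of_ne hij]
    omega

lemma card_gain (m : ℕ) [NeZero m] (y : Fin (m-1) → ℕ) (j : Fin (m-1)) (hj : 1 ≤ y j)
    (hz : ∀ z, z ≤ y → z ≠ 0 → SS m z ≠ 0) :
    (subSums m (Function.update y j (y j - 1))).card + 1 ≤ (subSums m y).card := by
  set y' := Function.update y j (y j - 1) with hy'
  have hle : y' ≤ y := by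
    refine Pi.le_def.mpr fun i => ?_
    rw [hy', Function.update_apply]
    split_ifs with h
    · rw [h]; omega
    · exact le_rfl
  have hnot : ¬ (∀ w ∈ subSums m y', w + vv m j ∈ subSums m y') := by
    intro hcl
    have hneg := neg_mem_of_closed m _ (vv m j) (zero_mem_subSums m y') hcl
    obtain ⟨z, hzle, hzs⟩ := (mem_subSums m).1 hneg
    have hle2 : z + Pi.single j 1 ≤ y := add_single_le m hj hzle
    have hSS : SS m (z + Pi.single j 1) = 0 := by
      rw [SS_add, SS_single, hzs]; ring
    have hne : z + Pi.single j 1 ≠ 0 := by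
      intro h
      have h2 := congrFun h j
      simp only [Pi.add_apply, Pi.single_eq_same, Pi.zero_apply] at h2
      omega
    exact hz _ hle2 hne hSS
  push_neg at hnot
  obtain ⟨w, hw, hwn⟩ := hnot
  have hwy : w + vv m j ∈ subSums m y := by
    obtain ⟨z, hzle, rfl⟩ := (mem_subSums m).1 hw
    exact (mem_subSums m).2 ⟨z + Pi.single j 1, add_single_le m hj hzle,
      by rw [SS_add, SS_single]⟩
  have hsub : insert (w + vv m j) (subSums m y') ⊆ subSums m y := by
    intro t ht
    rcases Finset.mem_insert.1 ht with rfl | ht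
    · exact hwy
    · exact subSums_mono m hle ht
  have hcc := Finset.card_le_card hsub
  rw [Finset.card_insert_of_notMem hwn] at hcc
  omega

lemma sqf_bound (m : ℕ) [NeZero m] (y : Fin (m-1) → ℕ) (hsq : ∀ i, y i ≤ 1)
    (hn : 2 ≤ ∑ i, y i)
    (hz : ∀ z, z ≤ y → z ≠ 0 → z ≠ y → SS m z ≠ 0) :
    2 * ∑ i, y i ≤ (subSums m y).card + 1 ∧
      (SS m y ≠ 0 → 2 * ∑ i, y i ≤ (subSums m y).card) := by
  classical
  set n := ∑ i, y i with hnn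
  set s := SS m y with hss
  set D := (Finset.univ.filter (fun i => y i ≠ 0)).image (vv m) with hDdef
  set E := (Finset.univ.filter (fun i => y i ≠ 0)).image (fun j => s - vv m j) with hEdef
  have hsupp : ∀ j, j ∈ Finset.univ.filter (fun i : Fin (m-1) => y i ≠ 0) → 1 ≤ y j := by
    intro j hj
    have := (Finset.mem_filter.1 hj).2
    omega
  have hcard : (Finset.univ.filter (fun i => y i ≠ 0)).card = n := (sq_sum (m-1) y hsq).symm
  have hyj : ∀ j, j ∈ Finset.univ.filter (fun i : Fin (m-1) => y i ≠ 0) →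
      SS m (y - Pi.single j 1) = s - vv m j := by
    intro j hj
    rw [SS_sub m y _ (single_le (m-1) y j (hsupp j hj)), SS_single]
  have hsumyj : ∀ j, j ∈ Finset.univ.filter (fun i : Fin (m-1) => y i ≠ 0) →
      ∑ i, ((y - Pi.single j 1 : Fin (m-1) → ℕ)) i = n - 1 := by
    intro j hj
    have h1 := sum_sub_add (m-1) y (Pi.single j 1) (single_le (m-1) y j (hsupp j hj))
    have h2 := sum_single (m-1) j
    omega
  have hkill : ∀ j, j ∈ Finset.univ.filter (fun i : Fin (m-1) => y i ≠ 0) →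
      SS m (y - Pi.single j 1) ≠ 0 := by
    intro j hj h0
    have e1 := hsumyj j hj
    exact hz (y - Pi.single j 1) (sub_le_self' (m-1) y _)
      (ne_zero_of_sum (m-1) _ (by omega)) (ne_of_sum_ne (m-1) _ _ (by omega)) h0
  have h0D : (0 : ZMod m) ∉ D := by
    intro h
    obtain ⟨j, hj, hj0⟩ := Finset.mem_image.1 h
    exact vv_ne_zero m j hj0
  have h0E : (0 : ZMod m) ∉ E := by
    intro h
    obtain ⟨j, hj, hj0⟩ := Finset.mem_image.1 h
    exact hkill j hj (by rw [hyj j hj, hj0])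
  have hsD : s ∉ D := by
    intro h
    obtain ⟨j, hj, hj0⟩ := Finset.mem_image.1 h
    exact hkill j hj (by rw [hyj j hj, hj0, sub_self])
  have hsE : s ∉ E := by
    intro h
    obtain ⟨j, hj, hj0⟩ := Finset.mem_image.1 h
    exact vv_ne_zero m j (by linear_combination -hj0)
  have hcD : D.card = n := by
    rw [hDdef, Finset.card_image_of_injOn (fun a _ b _ h => vv_inj m h), hcard]
  have hcE : E.card = n := by
    rw [hEdef, Finset.card_image_of_injOn
      (fun a _ b _ h => vv_inj m (by linear_combination -h)), hcard]
  have hDE : 2 * n - 2 ≤ (D ∪ E).card := by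
    rcases Nat.lt_or_ge n 3 with h3 | h3
    · have hDsub : D ⊆ D ∪ E := fun a ha => Finset.mem_union_left E ha
      have := Finset.card_le_card hDsub
      omega
    · have hkey : ∀ t ∈ D ∩ E, t + t = s := by
        intro t ht
        obtain ⟨hDm, hEm⟩ := Finset.mem_inter.1 ht
        obtain ⟨j, hj, hjt⟩ := Finset.mem_image.1 hDm
        obtain ⟨j', hj', hjt'⟩ := Finset.mem_image.1 hEm
        by_cases hjj : j = j'
        · subst hjj
          rw [← hjt] at hjt' ⊢
          linear_combination -hjt'
        · exfalso
          set z : Fin (m-1) → ℕ := Pi.single j 1 + Pi.single j' 1 with hzdef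
          have hzle : z ≤ y := by
            refine Pi.le_def.mpr fun i => ?_
            have e1 := hsupp j hj
            have e2 := hsupp j' hj'
            simp only [hzdef, Pi.add_apply, Pi.single_apply]
            rcases eq_or_ne i j with h1 | h1
            · rcases eq_or_ne i j' with h2 | h2
              · exact absurd (h1.symm.trans h2) hjj
              · rw [if_pos h1, if_neg h2, h1]; omega
            · rw [if_neg h1]
              rcases eq_or_ne i j' with h2 | h2
              · rw [if_pos h2, h2]; omega
              · rw [if_neg h2]; omega
          have hzsum : ∑ i, z i = 2 := by
            rw [hzdef]
            simp only [Pi.add_apply]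
            rw [Finset.sum_add_distrib, sum_single, sum_single]
          have hzSS : SS m z = vv m j + vv m j' := by
            rw [hzdef, SS_add, SS_single, SS_single]
          have hvs : vv m j + vv m j' = s := by
            have hv' : vv m j' = s - t := by linear_combination -hjt'
            rw [hjt, hv']
            ring
          have hw : SS m (y - z) = 0 := by
            rw [SS_sub m y z hzle, hzSS, hvs, sub_self]
          have hwsum := sum_sub_add (m-1) y z hzle
          exact hz (y - z) (sub_le_self' (m-1) y z)
            (ne_zero_of_sum (m-1) _ (by omega)) (ne_of_sum_ne (m-1) _ _ (by omega)) hw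
      have hDEcard : (D ∩ E).card ≤ 2 := by
        rcases Finset.eq_empty_or_nonempty (D ∩ E) with he | ⟨t0, ht0⟩
        · rw [he]; simp
        · have hsubset : D ∩ E ⊆ {t0, t0 + ((m/2 : ℕ) : ZMod m)} := by
            intro t ht
            have h1 := hkey t ht
            have h0 := hkey t0 ht0
            have h2 : (t - t0) + (t - t0) = 0 := by linear_combination h1 - h0
            rcases two_torsion m _ h2 with h | h
            · have : t = t0 := by linear_combination h
              simp [this]
            · have : t = t0 + ((m/2 : ℕ) : ZMod m) := by linear_combination h
              simp [this]
          have := Finset.card_le_card hsubset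
          have h2 := Finset.card_insert_le t0 ({t0 + ((m/2 : ℕ) : ZMod m)} : Finset (ZMod m))
          have h3 : ({t0 + ((m/2 : ℕ) : ZMod m)} : Finset (ZMod m)).card = 1 :=
            Finset.card_singleton _
          omega
      have := Finset.card_union_add_card_inter D E
      omega
  have hDEsub : D ∪ E ⊆ subSums m y := by
    intro t ht
    rcases Finset.mem_union.1 ht with ht | ht
    · obtain ⟨j, hj, rfl⟩ := Finset.mem_image.1 ht
      exact (mem_subSums m).2 ⟨Pi.single j 1, single_le (m-1) y j (hsupp j hj), SS_single m j⟩
    · obtain ⟨j, hj, rfl⟩ := Finset.mem_image.1 ht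
      exact (mem_subSums m).2 ⟨y - Pi.single j 1, sub_le_self' (m-1) y _, hyj j hj⟩
  have h0DE : (0:ZMod m) ∉ D ∪ E := by
    intro h
    rcases Finset.mem_union.1 h with h | h
    · exact h0D h
    · exact h0E h
  have hins1 : insert (0:ZMod m) (D ∪ E) ⊆ subSums m y := by
    intro t ht
    rcases Finset.mem_insert.1 ht with rfl | ht
    · exact zero_mem_subSums m y
    · exact hDEsub ht
  have hc1 : (D ∪ E).card + 1 ≤ (subSums m y).card := by
    have := Finset.card_le_card hins1
    rwa [Finset.card_insert_of_notMem h0DE] at this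
  constructor
  · omega
  · intro hS
    have hsin : s ∉ insert (0:ZMod m) (D ∪ E) := by
      intro h
      rcases Finset.mem_insert.1 h with h | h
      · exact hS h
      · rcases Finset.mem_union.1 h with h | h
        · exact hsD h
        · exact hsE h
    have hins2 : insert s (insert (0:ZMod m) (D ∪ E)) ⊆ subSums m y := by
      intro t ht
      rcases Finset.mem_insert.1 ht with rfl | ht
      · exact (mem_subSums m).2 ⟨y, le_rfl, rfl⟩
      · exact hins1 ht
    have := Finset.card_le_card hins2
    rw [Finset.card_insert_of_notMem hsin, Finset.card_insert_of_notMem h0DE] at this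
    omega

lemma lemO (m : ℕ) [NeZero m] :
    ∀ (N : ℕ) (y : Fin (m-1) → ℕ), (∑ i, y i) ≤ N →
    (∀ z, z ≤ y → z ≠ 0 → SS m z ≠ 0) →
    (∑ i, y i) + (Finset.univ.filter (fun i => y i ≠ 0)).card ≤ (subSums m y).card := by
  intro N
  induction N with
  | zero =>
    intro y hN hz
    have hy : ∀ i, y i = 0 := by
      intro i
      have h1 := Finset.single_le_sum (f := y) (fun i _ => Nat.zero_le _) (Finset.mem_univ i)
      omega
    have h1 : ∑ i, y i = 0 := Finset.sum_eq_zero fun i _ => hy i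
    have h2 : (Finset.univ.filter (fun i : Fin (m-1) => y i ≠ 0)) = ∅ :=
      Finset.filter_eq_empty_iff.mpr (fun i _ => by simp [hy i])
    rw [h1, h2]
    simp
  | succ N ih =>
    intro y hN hz
    by_cases hsmall : ∑ i, y i ≤ N
    · exact ih y hsmall hz
    have hn : ∑ i, y i = N + 1 := by omega
    by_cases hbig : ∃ j, 2 ≤ y j
    · obtain ⟨j, hj⟩ := hbig
      set y' := Function.update y j (y j - 1) with hy'
      have hle : y' ≤ y := by
        refine Pi.le_def.mpr fun i => ?_
        rw [hy', Function.update_apply]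
        split_ifs with h
        · rw [h]; omega
        · exact le_rfl
      have hz' : ∀ z, z ≤ y' → z ≠ 0 → SS m z ≠ 0 :=
        fun z h1 h2 => hz z (le_trans h1 hle) h2
      have hsupp : (Finset.univ.filter (fun i : Fin (m-1) => y' i ≠ 0)) =
          (Finset.univ.filter (fun i : Fin (m-1) => y i ≠ 0)) := by
        apply Finset.filter_congr
        intro i _
        rw [hy', Function.update_apply]
        split_ifs with h
        · rw [h]; constructor <;> intro <;> omega
        · rfl
      have hsum' : ∑ i, y' i = N := by
        have h1 := Finset.sum_update_of_mem (Finset.mem_univ j) y (y j - 1)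
        rw [Finset.sdiff_singleton_eq_erase] at h1
        have h2 := Finset.add_sum_erase Finset.univ y (Finset.mem_univ j)
        rw [hy']
        omega
      have hgain := card_gain m y j (by omega) hz
      rw [← hy'] at hgain
      have hih := ih y' (le_of_eq hsum') hz'
      rw [hsupp, hsum'] at hih
      omega
    · push_neg at hbig
      have hsq : ∀ i, y i ≤ 1 := fun i => by have := hbig i; omega
      have hcard := sq_sum (m-1) y hsq
      by_cases h2 : 2 ≤ ∑ i, y i
      · have hzp : ∀ z, z ≤ y → z ≠ 0 → z ≠ y → SS m z ≠ 0 := fun z ha hb _ => hz z ha hb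
        have hS : SS m y ≠ 0 := hz y le_rfl (ne_zero_of_sum (m-1) y (by omega))
        have := (sqf_bound m y hsq h2 hzp).2 hS
        omega
      · have hn1 : ∑ i, y i = 1 := by omega
        have hS : SS m y ≠ 0 := hz y le_rfl (ne_zero_of_sum (m-1) y (by omega))
        have hsub : ({0, SS m y} : Finset (ZMod m)) ⊆ subSums m y := by
          intro t ht
          rcases Finset.mem_insert.1 ht with rfl | ht
          · exact zero_mem_subSums m y
          · rw [Finset.mem_singleton] at ht
            subst ht
            exact (mem_subSums m).2 ⟨y, le_rfl, rfl⟩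
        have hc : ({0, SS m y} : Finset (ZMod m)).card = 2 := by
          rw [Finset.card_insert_of_notMem (by simpa using hS.symm), Finset.card_singleton]
        have := Finset.card_le_card hsub
        omega

end Stmt6Aux


/-- Lemma on supports: if an indecomposable solution of the standard congruence `(C_m)`,
`m ≥ 4`, has width at least `s`, then its length is at most `m − s + 1`. -/
theorem stmt_6 (m : ℕ) (hm : 4 ≤ m) (x : Fin (m - 1) → ℕ)
    (hx : (∑ i : Fin (m - 1), ((i : ℕ) + 1) * x i) % m = 0) (hx0 : x ≠ 0)
    (hmin : ∀ y : Fin (m - 1) → ℕ,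
      (∑ i : Fin (m - 1), ((i : ℕ) + 1) * y i) % m = 0 → y ≠ 0 → y ≤ x → y = x)
    (s : ℕ) (hs : s ≤ (Finset.univ.filter (fun i => x i ≠ 0)).card) :
    ∑ i, x i ≤ m - s + 1 := by
  classical
  haveI : NeZero m := ⟨by omega⟩
  have hxS : Stmt6Aux.SS m x = 0 := by
    unfold Stmt6Aux.SS
    rw [ZMod.natCast_eq_zero_iff]
    exact Nat.dvd_of_mod_eq_zero hx
  have hmin' : ∀ z, z ≤ x → z ≠ 0 → Stmt6Aux.SS m z = 0 → z = x := by
    intro z h1 h2 h3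
    refine hmin z ?_ h2 h1
    have hdvd : m ∣ ∑ i : Fin (m - 1), ((i : ℕ) + 1) * z i := by
      rw [← ZMod.natCast_eq_zero_iff]
      exact h3
    obtain ⟨c, hc⟩ := hdvd
    rw [hc]
    exact Nat.mul_mod_right m c
  have hcardm : ∀ (T : Fin (m-1) → ℕ), (Stmt6Aux.subSums m T).card ≤ m := by
    intro T
    have h1 := Finset.card_le_univ (Stmt6Aux.subSums m T)
    rwa [ZMod.card] at h1
  have hpos : 1 ≤ ∑ i, x i := by
    rcases Nat.eq_zero_or_pos (∑ i, x i) with h | h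
    · exfalso
      apply hx0
      funext i
      have h1 := Finset.single_le_sum (f := x) (fun i _ => Nat.zero_le _) (Finset.mem_univ i)
      simp only [Pi.zero_apply]
      omega
    · omega
  by_cases hbig : ∃ j, 2 ≤ x j
  · obtain ⟨j, hj⟩ := hbig
    set T := Function.update x j (x j - 1) with hT
    have hle : T ≤ x := by
      refine Pi.le_def.mpr fun i => ?_
      rw [hT, Function.update_apply]
      split_ifs with h
      · rw [h]; omega
      · exact le_rfl
    have hzT : ∀ z, z ≤ T → z ≠ 0 → Stmt6Aux.SS m z ≠ 0 := by
      intro z h1 h2 h3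
      have hzx := hmin' z (le_trans h1 hle) h2 h3
      have hzj := Pi.le_def.mp h1 j
      rw [hT, Function.update_self] at hzj
      rw [hzx] at hzj
      omega
    have hsupp : (Finset.univ.filter (fun i : Fin (m-1) => T i ≠ 0)) =
        (Finset.univ.filter (fun i : Fin (m-1) => x i ≠ 0)) := by
      apply Finset.filter_congr
      intro i _
      rw [hT, Function.update_apply]
      split_ifs with h
      · rw [h]; constructor <;> intro <;> omega
      · rfl
    have hsum' : ∑ i, T i = (∑ i, x i) - 1 := by
      have h1 := Finset.sum_update_of_mem (Finset.mem_univ j) x (x j - 1)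
      rw [Finset.sdiff_singleton_eq_erase] at h1
      have h2 := Finset.add_sum_erase Finset.univ x (Finset.mem_univ j)
      rw [hT]
      omega
    have hO := Stmt6Aux.lemO m (∑ i, T i) T le_rfl hzT
    rw [hsupp, hsum'] at hO
    have hcm := hcardm T
    omega
  · push_neg at hbig
    have hsq : ∀ i, x i ≤ 1 := fun i => by have := hbig i; omega
    have hcard := Stmt6Aux.sq_sum (m-1) x hsq
    by_cases h3 : 3 ≤ ∑ i, x i
    · have hzp : ∀ z, z ≤ x → z ≠ 0 → z ≠ x → Stmt6Aux.SS m z ≠ 0 := by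
        intro z h1 h2 h4 h5
        exact h4 (hmin' z h1 h2 h5)
      have hB := (Stmt6Aux.sqf_bound m x hsq (by omega) hzp).1
      have hcm := hcardm x
      omega
    · omega
end

section
/- Let m ≥ 4 and let x be an indecomposable solution of the standard congruence 1·x₁ + ⋯ + (m−1)·x_{m−1} ≡ 0 (mod m). Then the width satisfies σ(x) ≤ m/2 and the total size satisfies ‖x‖₁ + σ(x) ≤ m + 1. -/
open Finset

private def Ssum (m : ℕ) (y : Fin (m-1) → ℕ) : ZMod m :=
  ((∑ i : Fin (m-1), ((i : ℕ) + 1) * y i : ℕ) : ZMod m)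

private def vv (m : ℕ) (i : Fin (m-1)) : ZMod m := (((i : ℕ) + 1 : ℕ) : ZMod m)

private lemma Ssum_add (m : ℕ) (y w : Fin (m-1) → ℕ) :
    Ssum m (y + w) = Ssum m y + Ssum m w := by
  have h : (∑ i : Fin (m-1), ((i : ℕ) + 1) * (y + w) i)
      = (∑ i : Fin (m-1), ((i : ℕ) + 1) * y i) + (∑ i : Fin (m-1), ((i : ℕ) + 1) * w i) := by
    rw [← Finset.sum_add_distrib]
    exact Finset.sum_congr rfl fun i _ => by simp [Pi.add_apply, mul_add]
  unfold Ssum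
  rw [h]
  push_cast
  ring

private lemma Ssum_zero (m : ℕ) : Ssum m 0 = 0 := by
  unfold Ssum
  simp

private lemma Ssum_single (m : ℕ) (i : Fin (m-1)) :
    Ssum m (Pi.single i 1) = vv m i := by
  unfold Ssum vv
  congr 1
  rw [Finset.sum_eq_single i]
  · simp
  · intro j _ hj
    simp [Pi.single_eq_of_ne hj]
  · simp

private lemma add_sub_of_le'' {n : ℕ} {y z : Fin n → ℕ} (h : y ≤ z) : y + (z - y) = z := by
  funext j
  have := Pi.le_def.mp h j
  simp only [Pi.add_apply, Pi.sub_apply]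
  omega

private lemma Ssum_sub (m : ℕ) {y z : Fin (m-1) → ℕ} (h : y ≤ z) :
    Ssum m (z - y) = Ssum m z - Ssum m y := by
  have h2 := Ssum_add m y (z - y)
  rw [add_sub_of_le'' h] at h2
  rw [eq_sub_iff_add_eq, add_comm]
  exact h2.symm

private lemma vv_inj (m : ℕ) [NeZero m] {i j : Fin (m-1)} (h : vv m i = vv m j) : i = j := by
  have hm := Nat.pos_of_ne_zero (NeZero.ne m)
  have hi : ((i : ℕ) + 1) < m := by have := i.isLt; omega
  have hj : ((j : ℕ) + 1) < m := by have := j.isLt; omega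
  have hval := congrArg ZMod.val h
  rw [vv, vv, ZMod.val_cast_of_lt hi, ZMod.val_cast_of_lt hj] at hval
  exact Fin.ext (by omega)

private lemma vv_ne_zero (m : ℕ) [NeZero m] (i : Fin (m-1)) : vv m i ≠ 0 := by
  have hm := Nat.pos_of_ne_zero (NeZero.ne m)
  have hi : ((i : ℕ) + 1) < m := by have := i.isLt; omega
  intro h
  have hval := congrArg ZMod.val h
  rw [vv, ZMod.val_cast_of_lt hi, ZMod.val_zero] at hval
  omega

private lemma mod_two_cases {m a c : ℕ} (hm : 0 < m) (hc : c < m) (ha : a % m = c)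
    (h2 : a < 2 * m) : a = c ∨ a = m + c := by
  rcases Nat.lt_or_ge a m with h | h
  · left
    rw [Nat.mod_eq_of_lt h] at ha
    omega
  · right
    have hd := Nat.div_add_mod a m
    have h1 : a / m = 1 := Nat.div_eq_of_lt_le (by omega) (by omega)
    rw [ha, h1] at hd
    omega
private def SIG (m : ℕ) (z : Fin (m-1) → ℕ) : Finset (ZMod m) :=
  (Finset.Iic z).image (Ssum m)

private lemma mem_SIG (m : ℕ) {z y : Fin (m-1) → ℕ} (h : y ≤ z) : Ssum m y ∈ SIG m z :=
  Finset.mem_image_of_mem _ (Finset.mem_Iic.mpr h)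

private lemma SIG_mono (m : ℕ) {z z' : Fin (m-1) → ℕ} (h : z' ≤ z) : SIG m z' ⊆ SIG m z :=
  Finset.image_subset_image (Finset.Iic_subset_Iic.mpr h)

private lemma sum_of_le_one {n : ℕ} (z : Fin n → ℕ) (h : ∀ i, z i ≤ 1) :
    ∑ i, z i = (Finset.univ.filter fun i => z i ≠ 0).card := by
  rw [Finset.card_filter]
  refine Finset.sum_congr rfl fun i _ => ?_
  have := h i
  by_cases hi : z i = 0 <;> simp [hi] <;> omega
private lemma key (m : ℕ) [NeZero m] :
    ∀ N (z : Fin (m-1) → ℕ), (∑ i, z i) = N →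
      (∀ y, y ≤ z → Ssum m y = 0 → y = 0) →
      N + (Finset.univ.filter fun i => z i ≠ 0).card ≤ (SIG m z).card := by
  have hm := Nat.pos_of_ne_zero (NeZero.ne m)
  intro N
  induction N using Nat.strong_induction_on with
  | _ N ih =>
  intro z hN hz
  have hzsub_le : ∀ y : Fin (m-1) → ℕ, z - y ≤ z := by
    intro y; rw [Pi.le_def]; intro j; simp only [Pi.sub_apply]; omega
  have h0le : (0 : Fin (m-1) → ℕ) ≤ z := Pi.le_def.mpr fun j => by simp
  by_cases hdup : ∃ i, 2 ≤ z i
  · obtain ⟨i₀, hi₀⟩ := hdup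
    set z' : Fin (m-1) → ℕ := Function.update z i₀ (z i₀ - 1) with hz'def
    have hz'i₀ : z' i₀ = z i₀ - 1 := by simp [hz'def]
    have hz'ne : ∀ j, j ≠ i₀ → z' j = z j := fun j hj => Function.update_of_ne hj _ _
    have hle : z' ≤ z := by
      rw [Pi.le_def]
      intro j
      by_cases h : j = i₀
      · subst h; rw [hz'i₀]; omega
      · rw [hz'ne j h]
    have hNpos : 2 ≤ N := by
      have : z i₀ ≤ ∑ i, z i := Finset.single_le_sum (fun i _ => Nat.zero_le _) (Finset.mem_univ i₀)
      omega
    have hsum' : ∑ i, z' i = N - 1 := by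
      rw [hz'def, Finset.sum_update_of_mem (Finset.mem_univ i₀)]
      have h2 : z i₀ + ∑ i ∈ Finset.univ.erase i₀, z i = ∑ i, z i :=
        Finset.add_sum_erase _ _ (Finset.mem_univ i₀)
      rw [Finset.erase_eq] at h2
      omega
    have hzsf' : ∀ y, y ≤ z' → Ssum m y = 0 → y = 0 := fun y hy => hz y (hy.trans hle)
    have hfil : (Finset.univ.filter fun i => z' i ≠ 0) = (Finset.univ.filter fun i => z i ≠ 0) := by
      ext j
      simp only [Finset.mem_filter, Finset.mem_univ, true_and]
      by_cases h : j = i₀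
      · subst h; rw [hz'i₀]; constructor <;> intro <;> omega
      · rw [hz'ne j h]
    have hnotin : Ssum m z ∉ SIG m z' := by
      intro hmem
      obtain ⟨y, hy, hsy⟩ := Finset.mem_image.mp hmem
      rw [Finset.mem_Iic] at hy
      have hyz : y ≤ z := hy.trans hle
      have h0 : Ssum m (z - y) = 0 := by rw [Ssum_sub m hyz, hsy, sub_self]
      have hzero := hz (z - y) (hzsub_le y) h0
      have h1 : z i₀ - y i₀ = 0 := by
        have := congrFun hzero i₀
        simpa [Pi.sub_apply] using this
      have h2 : y i₀ ≤ z i₀ - 1 := by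
        have := Pi.le_def.mp hy i₀
        rwa [hz'i₀] at this
      omega
    have hins : insert (Ssum m z) (SIG m z') ⊆ SIG m z := by
      intro a ha
      rcases Finset.mem_insert.mp ha with h | h
      · subst h; exact mem_SIG m le_rfl
      · exact SIG_mono m hle h
    have hcard := Finset.card_le_card hins
    rw [Finset.card_insert_of_notMem hnotin] at hcard
    have hih := ih (N-1) (by omega) z' hsum' hzsf'
    rw [hfil] at hih
    omega
  · push_neg at hdup
    have hone : ∀ i, z i ≤ 1 := fun i => by have := hdup i; omega
    set T := Finset.univ.filter fun i => z i ≠ 0 with hT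
    have hzT : ∀ i ∈ T, z i = 1 := by
      intro i hi
      have h1 := hone i
      have h2 : z i ≠ 0 := (Finset.mem_filter.mp hi).2
      omega
    have hNT : N = T.card := by rw [← hN, sum_of_le_one z hone]
    have hsingle_le : ∀ i ∈ T, Pi.single i 1 ≤ z := by
      intro i hi
      rw [Pi.le_def]
      intro j
      by_cases h : j = i
      · subst h; rw [Pi.single_eq_same]; exact (hzT j hi).ge
      · rw [Pi.single_eq_of_ne h]; omega
    rcases Nat.lt_or_ge T.card 2 with hk | hk
    · rcases Nat.eq_zero_or_pos T.card with hk0 | hk1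
      · have h0mem : (0 : ZMod m) ∈ SIG m z := by
          rw [← Ssum_zero m]; exact mem_SIG m h0le
        have hpos : 1 ≤ (SIG m z).card := Finset.card_pos.mpr ⟨0, h0mem⟩
        omega
      · obtain ⟨i, hiT⟩ := Finset.card_pos.mp hk1
        have hsub : ({(0 : ZMod m), vv m i} : Finset (ZMod m)) ⊆ SIG m z := by
          intro a ha
          rcases Finset.mem_insert.mp ha with h | h
          · subst h; rw [← Ssum_zero m]; exact mem_SIG m h0le
          · rw [Finset.mem_singleton.mp h, ← Ssum_single m i]
            exact mem_SIG m (hsingle_le i hiT)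
        have hc2 : ({(0 : ZMod m), vv m i} : Finset (ZMod m)).card = 2 :=
          Finset.card_pair (Ne.symm (vv_ne_zero m i))
        have := Finset.card_le_card hsub
        omega
    · have hTne : T.Nonempty := Finset.card_pos.mp (by omega)
      set V := T.image (vv m) with hV
      set W := T.image (fun i => Ssum m z - vv m i) with hW
      have hVcard : V.card = T.card := Finset.card_image_of_injOn fun i _ j _ h => vv_inj m h
      have hWcard : W.card = T.card := Finset.card_image_of_injOn (by
        intro i _ j _ h
        exact vv_inj m (sub_right_inj.mp h))
      have hSz0 : Ssum m z ≠ 0 := by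
        intro h
        obtain ⟨i, hiT⟩ := hTne
        have hz0 := hz z le_rfl h
        have h1 : z i = 0 := by rw [hz0]; rfl
        have := hzT i hiT
        omega
      have hsub_ne : ∀ i ∈ T, z - Pi.single i 1 ≠ 0 := by
        intro i hiT h
        obtain ⟨j, hjT, hji⟩ := Finset.exists_mem_ne hk i
        have h1 := congrFun h j
        rw [Pi.sub_apply, Pi.single_eq_of_ne hji] at h1
        have := hzT j hjT
        simp at h1
        omega
      have hWmem : ∀ i ∈ T, Ssum m z - vv m i = Ssum m (z - Pi.single i 1) := by
        intro i hiT
        rw [Ssum_sub m (hsingle_le i hiT), Ssum_single]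
      have h0V : (0 : ZMod m) ∉ V := by
        intro h
        obtain ⟨i, hiT, hvi⟩ := Finset.mem_image.mp h
        exact vv_ne_zero m i hvi
      have h0W : (0 : ZMod m) ∉ W := by
        intro h
        obtain ⟨i, hiT, hvi⟩ := Finset.mem_image.mp h
        have h0 : Ssum m (z - Pi.single i 1) = 0 := by rw [← hWmem i hiT]; exact hvi
        exact hsub_ne i hiT (hz _ (hzsub_le _) h0)
      have hSzV : Ssum m z ∉ V := by
        intro h
        obtain ⟨i, hiT, hvi⟩ := Finset.mem_image.mp h
        have h0 : Ssum m (z - Pi.single i 1) = 0 := by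
          rw [← hWmem i hiT, hvi, sub_self]
        exact hsub_ne i hiT (hz _ (hzsub_le _) h0)
      have hSzW : Ssum m z ∉ W := by
        intro h
        obtain ⟨i, hiT, hvi⟩ := Finset.mem_image.mp h
        exact vv_ne_zero m i (sub_eq_self.mp hvi)
      have hVWcard : (V ∩ W).card ≤ 2 := by
        rcases Nat.lt_or_ge T.card 3 with hk3 | hk3
        · calc (V ∩ W).card ≤ V.card := Finset.card_le_card Finset.inter_subset_left
            _ ≤ 2 := by omega
        · set B2 := T.filter (fun i => vv m i + vv m i = Ssum m z) with hB2
          have hVWsub : V ∩ W ⊆ B2.image (vv m) := by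
            intro u hu
            obtain ⟨huV, huW⟩ := Finset.mem_inter.mp hu
            obtain ⟨i, hiT, hvi⟩ := Finset.mem_image.mp huV
            obtain ⟨j, hjT, hvj⟩ := Finset.mem_image.mp huW
            rcases eq_or_ne i j with hij | hij
            · subst hij
              refine Finset.mem_image.mpr ⟨i, Finset.mem_filter.mpr ⟨hiT, ?_⟩, hvi⟩
              have : Ssum m z - vv m i = vv m i := by rw [hvj, hvi]
              rw [sub_eq_iff_eq_add] at this
              rw [this]
            · exfalso
              have hjTi : j ∈ T.erase i := Finset.mem_erase.mpr ⟨hij.symm, hjT⟩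
              have hiTc : (T.erase i).card = T.card - 1 := Finset.card_erase_of_mem hiT
              have hjTc : ((T.erase i).erase j).card = (T.erase i).card - 1 :=
                Finset.card_erase_of_mem hjTi
              obtain ⟨l, hl⟩ := Finset.card_pos.mp (show 0 < ((T.erase i).erase j).card by omega)
              have hl1 := Finset.mem_erase.mp hl
              have hl2 := Finset.mem_erase.mp hl1.2
              have hlj : l ≠ j := hl1.1
              have hli : l ≠ i := hl2.1
              have hlT : l ∈ T := hl2.2
              have hySz : vv m i + vv m j = Ssum m z := by
                have h1 : Ssum m z - vv m j = vv m i := by rw [hvj, hvi]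
                rw [sub_eq_iff_eq_add] at h1
                rw [h1]
              have hyle : Pi.single i 1 + Pi.single j 1 ≤ z := by
                rw [Pi.le_def]
                intro a
                rw [Pi.add_apply]
                by_cases hai : a = i
                · subst hai
                  have h1 := hzT a hiT
                  rw [Pi.single_eq_same, Pi.single_eq_of_ne hij]
                  omega
                · by_cases haj : a = j
                  · subst haj
                    have h1 := hzT a hjT
                    rw [Pi.single_eq_same, Pi.single_eq_of_ne (Ne.symm hij)]
                    omega
                  · rw [Pi.single_eq_of_ne hai, Pi.single_eq_of_ne haj]
                    omega
              have hS0 : Ssum m (z - (Pi.single i 1 + Pi.single j 1)) = 0 := by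
                rw [Ssum_sub m hyle, Ssum_add, Ssum_single, Ssum_single, hySz, sub_self]
              have hz0 := hz _ (hzsub_le _) hS0
              have hcl := congrFun hz0 l
              rw [Pi.sub_apply, Pi.add_apply, Pi.single_eq_of_ne hli,
                Pi.single_eq_of_ne hlj] at hcl
              have := hzT l hlT
              simp at hcl
              omega
          have hc : (Ssum m z).val < m := ZMod.val_lt _
          have hB2card : B2.card ≤ ({(Ssum m z).val, m + (Ssum m z).val} : Finset ℕ).card := by
            refine Finset.card_le_card_of_injOn (fun i => 2 * ((i : ℕ) + 1)) ?_ ?_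
            · intro i hi
              have hprop := (Finset.mem_filter.mp hi).2
              have hcast : ((2 * ((i : ℕ) + 1) : ℕ) : ZMod m) = vv m i + vv m i := by
                unfold vv; push_cast; ring
              have hval : (2 * ((i : ℕ) + 1)) % m = (Ssum m z).val := by
                rw [← ZMod.val_natCast, hcast, hprop]
              have hlt : 2 * ((i : ℕ) + 1) < 2 * m := by have := i.isLt; omega
              rcases mod_two_cases hm hc hval hlt with h | h <;> simp [h]
            · intro i hi j hj h
              simp only at h
              exact Fin.ext (by omega)
          calc (V ∩ W).card ≤ (B2.image (vv m)).card := Finset.card_le_card hVWsub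
            _ ≤ B2.card := Finset.card_image_le
            _ ≤ 2 := by
              have := Finset.card_insert_le (Ssum m z).val ({m + (Ssum m z).val} : Finset ℕ)
              simp at this ⊢
              omega
      have hSzVW : Ssum m z ∉ V ∪ W := by
        rw [Finset.mem_union]
        push_neg
        exact ⟨hSzV, hSzW⟩
      have h0ins : (0 : ZMod m) ∉ insert (Ssum m z) (V ∪ W) := by
        rw [Finset.mem_insert, Finset.mem_union]
        push_neg
        exact ⟨Ne.symm hSz0, h0V, h0W⟩
      have hEsub : insert (0 : ZMod m) (insert (Ssum m z) (V ∪ W)) ⊆ SIG m z := by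
        intro a ha
        rcases Finset.mem_insert.mp ha with h | ha
        · subst h; rw [← Ssum_zero m]; exact mem_SIG m h0le
        rcases Finset.mem_insert.mp ha with h | ha
        · subst h; exact mem_SIG m le_rfl
        rcases Finset.mem_union.mp ha with h | h
        · obtain ⟨i, hiT, hvi⟩ := Finset.mem_image.mp h
          rw [← hvi, ← Ssum_single m i]
          exact mem_SIG m (hsingle_le i hiT)
        · obtain ⟨i, hiT, hvi⟩ := Finset.mem_image.mp h
          rw [← hvi, hWmem i hiT]
          exact mem_SIG m (hzsub_le _)
      have hEcard : (insert (0 : ZMod m) (insert (Ssum m z) (V ∪ W))).card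
          = 2 + (V ∪ W).card := by
        rw [Finset.card_insert_of_notMem h0ins, Finset.card_insert_of_notMem hSzVW]
        omega
      have hUnion := Finset.card_union_add_card_inter V W
      have hfin := Finset.card_le_card hEsub
      rw [hEcard] at hfin
      omega
private lemma part1 (m : ℕ) (hm : 4 ≤ m) (x : Fin (m-1) → ℕ)
    (hmin : ∀ y, y ≤ x → Ssum m y = 0 → y ≠ 0 → y = x) :
    2 * (Finset.univ.filter fun i => x i ≠ 0).card ≤ m := by
  haveI : NeZero m := ⟨by omega⟩
  have hmpos : 0 < m := by omega
  set T := Finset.univ.filter fun i => x i ≠ 0 with hT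
  by_cases hpair : ∃ i ∈ T, ∃ j ∈ T, i ≠ j ∧ vv m i + vv m j = 0
  · obtain ⟨i, hiT, j, hjT, hij, hvv⟩ := hpair
    set y : Fin (m-1) → ℕ := Pi.single i 1 + Pi.single j 1 with hy
    have hyval : ∀ a, y a = (if a = i then 1 else 0) + (if a = j then 1 else 0) := by
      intro a
      rw [hy, Pi.add_apply, Pi.single_apply, Pi.single_apply]
    have hxi : x i ≠ 0 := (Finset.mem_filter.mp hiT).2
    have hxj : x j ≠ 0 := (Finset.mem_filter.mp hjT).2
    have hyle : y ≤ x := by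
      rw [Pi.le_def]
      intro a
      rw [hyval a]
      by_cases hai : a = i
      · subst hai; simp [hij]; omega
      · by_cases haj : a = j
        · subst haj; simp [hai]; omega
        · simp [hai, haj]
    have hSy : Ssum m y = 0 := by rw [hy, Ssum_add, Ssum_single, Ssum_single, hvv]
    have hy0 : y ≠ 0 := by
      intro h
      have h1 := congrFun h i
      rw [hyval i] at h1
      simp [hij] at h1
    have hyx := hmin y hyle hSy hy0
    have hTij : T = {i, j} := by
      ext a
      rw [hT, Finset.mem_filter]
      simp only [Finset.mem_univ, true_and, Finset.mem_insert, Finset.mem_singleton]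
      rw [← hyx, hyval a]
      by_cases hai : a = i
      · simp [hai]
      · by_cases haj : a = j
        · simp [haj]
        · simp [hai, haj]
    have hcard : T.card = 2 := by rw [hTij]; exact Finset.card_pair hij
    omega
  · push_neg at hpair
    set A := T.image (vv m) with hA
    have hAcard : A.card = T.card := Finset.card_image_of_injOn fun i _ j _ h => vv_inj m h
    set B := A.image (fun a => -a) with hB
    have hBcard : B.card = A.card := Finset.card_image_of_injOn fun a _ b _ h => neg_injective h
    have hABsub : A ∪ B ⊆ Finset.univ.erase (0 : ZMod m) := by
      intro a ha
      rw [Finset.mem_erase]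
      refine ⟨?_, Finset.mem_univ a⟩
      rcases Finset.mem_union.mp ha with h | h
      · obtain ⟨i, hiT, hvi⟩ := Finset.mem_image.mp h
        rw [← hvi]
        exact vv_ne_zero m i
      · obtain ⟨b, hbA, hba⟩ := Finset.mem_image.mp h
        obtain ⟨i, hiT, hvi⟩ := Finset.mem_image.mp hbA
        rw [← hba, ← hvi]
        simp only [ne_eq, neg_eq_zero]
        exact vv_ne_zero m i
    have hhalf : ∀ a ∈ A ∩ B, ∃ i, i ∈ T ∧ vv m i = a ∧ 2 * ((i : ℕ) + 1) = m := by
      intro a ha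
      obtain ⟨haA, haB⟩ := Finset.mem_inter.mp ha
      obtain ⟨i, hiT, hvi⟩ := Finset.mem_image.mp haA
      obtain ⟨c, hcA, hca⟩ := Finset.mem_image.mp haB
      obtain ⟨j, hjT, hvj⟩ := Finset.mem_image.mp hcA
      have h1 : vv m i + vv m j = 0 := by
        rw [hvi, hvj, ← hca]
        exact neg_add_cancel c
      have hij : i = j := by
        by_contra hc
        exact hpair i hiT j hjT hc h1
      subst hij
      have hcast : ((2 * ((i : ℕ) + 1) : ℕ) : ZMod m) = vv m i + vv m i := by
        unfold vv; push_cast; ring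
      have hmod : (2 * ((i : ℕ) + 1)) % m = 0 := by
        have h2 := congrArg ZMod.val (hcast.trans h1)
        rwa [ZMod.val_natCast, ZMod.val_zero] at h2
      have hlt : 2 * ((i : ℕ) + 1) < 2 * m := by have := i.isLt; omega
      rcases mod_two_cases hmpos hmpos hmod hlt with h | h
      · omega
      · exact ⟨i, hiT, hvi, by omega⟩
    have hABinter : (A ∩ B).card ≤ 1 := by
      rw [Finset.card_le_one]
      intro a ha b hb
      obtain ⟨i, hiT, hvi, hi2⟩ := hhalf a ha
      obtain ⟨j, hjT, hvj, hj2⟩ := hhalf b hb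
      have hij : i = j := Fin.ext (by omega)
      rw [← hvi, ← hvj, hij]
    have hcardUB := Finset.card_le_card hABsub
    have hU : (Finset.univ.erase (0 : ZMod m)).card = m - 1 := by
      rw [Finset.card_erase_of_mem (Finset.mem_univ _), Finset.card_univ, ZMod.card]
    have hUI := Finset.card_union_add_card_inter A B
    omega


/-- For `m ≥ 4` and an indecomposable solution `x` of the standard congruence `(C_m)`:
the width satisfies `σ(x) ≤ m/2` and the total size `‖x‖₁ + σ(x) ≤ m + 1`. -/
theorem stmt_7 (m : ℕ) (hm : 4 ≤ m) (x : Fin (m - 1) → ℕ)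
    (hx : (∑ i : Fin (m - 1), ((i : ℕ) + 1) * x i) % m = 0) (hx0 : x ≠ 0)
    (hmin : ∀ y : Fin (m - 1) → ℕ,
      (∑ i : Fin (m - 1), ((i : ℕ) + 1) * y i) % m = 0 → y ≠ 0 → y ≤ x → y = x) :
    2 * (Finset.univ.filter (fun i => x i ≠ 0)).card ≤ m ∧
    (∑ i, x i) + (Finset.univ.filter (fun i => x i ≠ 0)).card ≤ m + 1 := by
  haveI : NeZero m := ⟨by omega⟩
  have hmpos : 0 < m := by omega
  have hmin' : ∀ y, y ≤ x → Ssum m y = 0 → y ≠ 0 → y = x := by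
    intro y hy hSy hy0
    refine hmin y ?_ hy0 hy
    have hdvd : m ∣ ∑ i : Fin (m-1), ((i : ℕ) + 1) * y i := by
      rw [← ZMod.natCast_eq_zero_iff]
      exact hSy
    obtain ⟨k, hk⟩ := hdvd
    rw [hk]
    exact Nat.mul_mod_right m k
  have hp1 := part1 m hm x hmin'
  refine ⟨hp1, ?_⟩
  by_cases hdup : ∃ i, 2 ≤ x i
  · obtain ⟨i₀, hi₀⟩ := hdup
    set z : Fin (m-1) → ℕ := Function.update x i₀ (x i₀ - 1) with hzdef
    have hzi₀ : z i₀ = x i₀ - 1 := by simp [hzdef]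
    have hzne : ∀ j, j ≠ i₀ → z j = x j := fun j hj => Function.update_of_ne hj _ _
    have hle : z ≤ x := by
      rw [Pi.le_def]
      intro j
      by_cases h : j = i₀
      · subst h; rw [hzi₀]; omega
      · rw [hzne j h]
    have hzsf : ∀ y, y ≤ z → Ssum m y = 0 → y = 0 := by
      intro y hy hSy
      by_contra hy0
      have hyx := hmin' y (hy.trans hle) hSy hy0
      have h1 := Pi.le_def.mp hy i₀
      rw [hzi₀, hyx] at h1
      omega
    have hkey := key m (∑ i, z i) z rfl hzsf
    have hSIGle : (SIG m z).card ≤ m := by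
      have h1 := Finset.card_le_univ (SIG m z)
      rwa [ZMod.card] at h1
    have hsumz : ∑ i, z i = (∑ i, x i) - 1 := by
      rw [hzdef, Finset.sum_update_of_mem (Finset.mem_univ i₀)]
      have h2 : x i₀ + ∑ i ∈ Finset.univ.erase i₀, x i = ∑ i, x i :=
        Finset.add_sum_erase _ _ (Finset.mem_univ i₀)
      rw [Finset.erase_eq] at h2
      omega
    have hsumge : 2 ≤ ∑ i, x i := by
      have : x i₀ ≤ ∑ i, x i :=
        Finset.single_le_sum (fun i _ => Nat.zero_le _) (Finset.mem_univ i₀)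
      omega
    have hfil : (Finset.univ.filter fun i => z i ≠ 0) = (Finset.univ.filter fun i => x i ≠ 0) := by
      ext j
      simp only [Finset.mem_filter, Finset.mem_univ, true_and]
      by_cases h : j = i₀
      · subst h; rw [hzi₀]; constructor <;> intro <;> omega
      · rw [hzne j h]
    rw [hsumz, hfil] at hkey
    omega
  · push_neg at hdup
    have hone : ∀ i, x i ≤ 1 := fun i => by have := hdup i; omega
    have hsum := sum_of_le_one x hone
    omega
end

section
/- Let m ≥ 2 and let i ∈ {1,…,m−1} with gcd(i, m) = 1. Then x = m·eᵢ is an extremal solution of the standard congruence (C_m): it is indecomposable with ‖x‖₁ + σ(x) = m + 1, and every extremal solution of width 1 has this form. Hence there are exactly φ(m) extremal solutions of width 1. -/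
/-- `x` is a solution of the standard congruence `(C_m)`. -/
def IsSol (m : ℕ) (x : Fin (m - 1) → ℕ) : Prop :=
  (∑ i : Fin (m - 1), ((i : ℕ) + 1) * x i) % m = 0

/-- `x` is an indecomposable solution of `(C_m)`. -/
def IsIndec (m : ℕ) (x : Fin (m - 1) → ℕ) : Prop :=
  IsSol m x ∧ x ≠ 0 ∧ ∀ y : Fin (m - 1) → ℕ, IsSol m y → y ≠ 0 → y ≤ x → y = x

/-- The width of `x`: the number of nonzero coordinates. -/
def width {m : ℕ} (x : Fin (m - 1) → ℕ) : ℕ :=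
  (Finset.univ.filter (fun i => x i ≠ 0)).card

/-- `x` is extremal: indecomposable with total size `m + 1`. -/
def IsExtremal (m : ℕ) (x : Fin (m - 1) → ℕ) : Prop :=
  IsIndec m x ∧ (∑ i, x i) + width x = m + 1

lemma sum_single (m : ℕ) (i : Fin (m - 1)) (t : ℕ) :
    (∑ j : Fin (m - 1), ((j : ℕ) + 1) * (if j = i then t else 0)) = ((i : ℕ) + 1) * t := by
  simp [mul_ite, Finset.sum_ite_eq']

lemma width_single (m : ℕ) (hm : 2 ≤ m) (i : Fin (m - 1)) :
    width (fun j => if j = i then m else 0) = 1 := by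
  unfold width
  have h : (Finset.univ.filter fun j : Fin (m - 1) => (if j = i then m else 0) ≠ 0)
      = {i} := by
    ext j
    by_cases hj : j = i <;> simp [hj] <;> omega
  rw [h, Finset.card_singleton]

/-- For `i` with `gcd(i, m) = 1`, the vector `m·eᵢ` is an extremal solution of `(C_m)`
of width 1; every extremal solution of width 1 has this form; and there are exactly
`φ(m)` extremal solutions of width 1. -/
theorem stmt_9 (m : ℕ) (hm : 2 ≤ m) :
    (∀ i : Fin (m - 1), Nat.Coprime ((i : ℕ) + 1) m →
      IsExtremal m (fun j => if j = i then m else 0)) ∧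
    (∀ x : Fin (m - 1) → ℕ, IsExtremal m x → width x = 1 →
      ∃ i : Fin (m - 1), Nat.Coprime ((i : ℕ) + 1) m ∧
        x = fun j => if j = i then m else 0) ∧
    {x : Fin (m - 1) → ℕ | IsExtremal m x ∧ width x = 1}.ncard = Nat.totient m := by
  have hmpos : 0 < m := by omega
  have part1 : ∀ i : Fin (m - 1), Nat.Coprime ((i : ℕ) + 1) m →
      IsExtremal m (fun j => if j = i then m else 0) := by
    intro i hc
    constructor
    · refine ⟨?_, ?_, ?_⟩
      · unfold IsSol
        rw [sum_single]
        simp [Nat.mul_mod_right]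
      · intro h
        have := congrFun h i
        simp at this
        omega
      · intro y hy hy0 hle
        have hzero : ∀ j, j ≠ i → y j = 0 := by
          intro j hj
          have := hle j
          simp [hj] at this
          omega
        have hyi : y i ≠ 0 := by
          intro h0
          apply hy0
          funext j
          by_cases hj : j = i
          · subst hj; exact h0
          · exact hzero j hj
        have hsy : (∑ j : Fin (m - 1), ((j : ℕ) + 1) * y j) = ((i : ℕ) + 1) * y i := by
          rw [Finset.sum_eq_single i]
          · intro j _ hj; simp [hzero j hj]
          · simp
        have hdvd : m ∣ ((i : ℕ) + 1) * y i := by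
          have h := hy
          unfold IsSol at h
          rw [hsy] at h
          exact Nat.dvd_of_mod_eq_zero h
        have hdy : m ∣ y i := hc.symm.dvd_of_dvd_mul_left hdvd
        have hle' : y i ≤ m := by
          have := hle i; simpa using this
        have hyi' : y i = m :=
          Nat.le_antisymm hle' (Nat.le_of_dvd (Nat.pos_of_ne_zero hyi) hdy)
        funext j
        by_cases hj : j = i
        · subst hj; simpa using hyi'
        · simp [hj, hzero j hj]
    · have h1 : (∑ j : Fin (m - 1), (if j = i then m else 0)) = m := by
        simp [Finset.sum_ite_eq']
      rw [h1, width_single m hm]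
  refine ⟨part1, ?_⟩
  have part2 : ∀ x : Fin (m - 1) → ℕ, IsExtremal m x → width x = 1 →
      ∃ i : Fin (m - 1), Nat.Coprime ((i : ℕ) + 1) m ∧
        x = fun j => if j = i then m else 0 := by
    intro x hx hw
    obtain ⟨⟨hsol, hx0, hind⟩, hsize⟩ := hx
    have hw' := hw
    unfold width at hw'
    rw [Finset.card_eq_one] at hw'
    obtain ⟨i, hi⟩ := hw'
    have hxz : ∀ j, j ≠ i → x j = 0 := by
      intro j hj
      by_contra h
      have hmem : j ∈ ({i} : Finset (Fin (m - 1))) := by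
        rw [← hi]; exact Finset.mem_filter.2 ⟨Finset.mem_univ _, h⟩
      simp at hmem
      exact hj hmem
    have hxi : x i ≠ 0 := by
      have hmem : i ∈ Finset.univ.filter fun j => x j ≠ 0 := by
        rw [hi]; simp
      simpa using hmem
    have hsumx : (∑ j : Fin (m - 1), x j) = x i := by
      rw [Finset.sum_eq_single i]
      · intro j _ hj; exact hxz j hj
      · simp
    have hxim : x i = m := by
      rw [hsumx, hw] at hsize; omega
    have hxeq : x = fun j => if j = i then m else 0 := by
      funext j
      by_cases hj : j = i
      · subst hj; simp [hxim]
      · simp [hj, hxz j hj]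
    refine ⟨i, ?_, hxeq⟩
    by_contra hc
    set d := Nat.gcd ((i : ℕ) + 1) m with hd
    have hdm : d ∣ m := Nat.gcd_dvd_right _ _
    have hdi : d ∣ (i : ℕ) + 1 := Nat.gcd_dvd_left _ _
    have hd2 : 1 < d := by
      rcases Nat.lt_or_ge d 2 with h | h
      · interval_cases d
        · exact absurd (Nat.eq_zero_of_gcd_eq_zero_right hd.symm) (by omega)
        · exact absurd hd.symm hc
      · omega
    set y : Fin (m - 1) → ℕ := fun j => if j = i then m / d else 0 with hy
    have hmd_pos : 0 < m / d :=
      Nat.div_pos (Nat.le_of_dvd hmpos hdm) (by omega)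
    have hmd_lt : m / d < m := Nat.div_lt_self hmpos hd2
    have hys : IsSol m y := by
      unfold IsSol
      rw [hy, sum_single]
      obtain ⟨k, hk⟩ := hdi
      have : ((i : ℕ) + 1) * (m / d) = k * m := by
        rw [hk, mul_comm d k, mul_assoc, Nat.mul_div_cancel' hdm]
      rw [this]
      simp [Nat.mul_mod_right]
    have hy0 : y ≠ 0 := by
      intro h
      have := congrFun h i
      simp [hy] at this
      have := Nat.le_of_dvd hmpos hdm; omega
    have hyle : y ≤ x := by
      intro j
      by_cases hj : j = i
      · subst hj; simp [hy, hxim]; omega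
      · simp [hy, hj]
    have := hind y hys hy0 hyle
    have := congrFun this i
    simp [hy, hxim] at this
    omega
  refine ⟨part2, ?_⟩
  set f : Fin (m - 1) → (Fin (m - 1) → ℕ) := fun i => fun j => if j = i then m else 0 with hf
  have hinj : Function.Injective f := by
    intro a b hab
    have h1 := congrFun hab a
    by_cases h : a = b
    · exact h
    · simp [hf, h] at h1; omega
  set S : Finset (Fin (m - 1)) :=
    Finset.univ.filter (fun i => Nat.Coprime ((i : ℕ) + 1) m) with hS
  have hset : {x : Fin (m - 1) → ℕ | IsExtremal m x ∧ width x = 1} = ↑(S.image f) := by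
    ext x
    simp only [Set.mem_setOf_eq, Finset.coe_image, Set.mem_image, Finset.mem_coe,
      hS, Finset.mem_filter, Finset.mem_univ, true_and]
    constructor
    · rintro ⟨hx, hw⟩
      obtain ⟨i, hc, rfl⟩ := part2 x hx hw
      exact ⟨i, hc, rfl⟩
    · rintro ⟨i, hc, rfl⟩
      exact ⟨part1 i hc, width_single m hm i⟩
  rw [hset, Set.ncard_coe_finset, Finset.card_image_of_injective _ hinj]
  rw [Nat.totient]
  refine Finset.card_bij' (fun i _ => (i : ℕ) + 1)
    (fun k hk => ⟨k - 1, ?_⟩) ?_ ?_ ?_ ?_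
  · simp only [Finset.mem_filter, Finset.mem_range] at hk
    omega
  · intro a ha
    simp only [hS, Finset.mem_filter, Finset.mem_univ, true_and] at ha
    simp only [Finset.mem_filter, Finset.mem_range]
    exact ⟨by omega, ha.symm⟩
  · intro k hk
    simp only [Finset.mem_filter, Finset.mem_range] at hk
    simp only [hS, Finset.mem_filter, Finset.mem_univ, true_and]
    have hk0 : k ≠ 0 := by
      intro h
      subst h
      have := Nat.coprime_zero_right m |>.mp hk.2
      omega
    have hkk : k - 1 + 1 = k := by omega
    rw [hkk]
    exact hk.2.symm
  · intro a ha
    ext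
    simp
  · intro k hk
    simp only [Finset.mem_filter, Finset.mem_range] at hk
    have hk0 : k ≠ 0 := by
      intro h
      subst h
      have := Nat.coprime_zero_right m |>.mp hk.2
      omega
    simp
    omega
end

section
/- If T ⊆ {1,…,m−1} is admissible, then #T ≤ m/2. -/
/-- If `T ⊆ {1,…,m−1}` is admissible (no nonempty subset sum divisible by `m`, `m ≥ 2`),
then `#T ≤ m/2`. -/
theorem stmt_14 (m : ℕ) (hm : 2 ≤ m) (T : Finset ℕ)
    (hsub : T ⊆ Finset.Icc 1 (m - 1))
    (hadm : ∀ U ⊆ T, U.Nonempty → ¬ m ∣ U.sum id) :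
    2 * T.card ≤ m := by
  -- No two distinct elements of T sum to m.
  have key : ∀ a ∈ T, ∀ b ∈ T, a ≠ b → a + b ≠ m := by
    intro a ha b hb hne habm
    have hsubU : ({a, b} : Finset ℕ) ⊆ T := by
      intro x hx
      simp only [Finset.mem_insert, Finset.mem_singleton] at hx
      rcases hx with rfl | rfl <;> assumption
    have hne' : ({a, b} : Finset ℕ).Nonempty := ⟨a, by simp⟩
    apply hadm _ hsubU hne'
    rw [Finset.sum_pair hne]
    simp [id, habm]
  have hcard : T.card ≤ (Finset.Icc 1 (m / 2)).card := by
    apply Finset.card_le_card_of_injOn (fun t => min t (m - t))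
    · intro t ht
      have := hsub ht
      show min t (m - t) ∈ Finset.Icc 1 (m / 2)
      rw [Finset.mem_Icc] at this ⊢
      omega
    · intro a ha b hb hmin
      by_contra hne
      have hab := key a ha b hb hne
      have h1 := hsub ha
      have h2 := hsub hb
      rw [Finset.mem_Icc] at h1 h2
      simp only at hmin
      omega
  rw [Nat.card_Icc] at hcard
  omega
end

section
/- For even m ≥ 6 and 1 ≤ a < m/2 with a ≠ m/4, the set T(m,a) = {a, m/2, m/2 + a} is an admissible subset of {1,…,m−1} with exactly 6 distinct residue classes of subset sums mod m, i.e., Δ_m(T(m,a)) = 6. -/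
/-- A finite set `T ⊆ {1,…,m−1}` is admissible if no nonempty subset has sum divisible
by `m`. -/
def Admissible (m : ℕ) (T : Finset ℕ) : Prop :=
  T ⊆ Finset.Icc 1 (m - 1) ∧ ∀ U ⊆ T, U.Nonempty → ¬ m ∣ U.sum id

/-- The diversity: the number of residue classes mod `m` represented by subset sums. -/
def diversity (m : ℕ) (T : Finset ℕ) : ℕ :=
  (T.powerset.image (fun U => U.sum id % m)).card

lemma subsets_three {x y z : ℕ} (U : Finset ℕ) (h : U ⊆ {x,y,z}) :
    U = ∅ ∨ U = {x} ∨ U = {y} ∨ U = {z} ∨ U = {x,y} ∨ U = {x,z} ∨ U = {y,z} ∨ U = {x,y,z} := by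
  have hU : ({x,y,z} : Finset ℕ) ∩ U = U := Finset.inter_eq_right.2 h
  by_cases hx : x ∈ U <;> by_cases hy : y ∈ U <;> by_cases hz : z ∈ U <;>
    simp only [show ({x,y,z} : Finset ℕ) = insert x (insert y {z}) from rfl,
      Finset.insert_inter_of_mem, Finset.insert_inter_of_notMem,
      Finset.singleton_inter_of_mem, Finset.singleton_inter_of_notMem,
      hx, hy, hz, not_false_iff] at hU <;> tauto

lemma rexists (a b : ℕ) (ha1 : 1 ≤ a) (ha2 : a < b) (h2ab : 2 * a ≠ b) (hb3 : 3 ≤ b) :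
    ∃ r, (2 * a + b) % (2 * b) = r ∧
      r ≠ 0 ∧ r ≠ a ∧ r ≠ 2 * a ∧ r ≠ b ∧ r ≠ b + a := by
  by_cases h : 2 * a < b
  · exact ⟨2 * a + b, Nat.mod_eq_of_lt (by omega), by omega⟩
  · refine ⟨2 * a - b, ?_, by omega⟩
    rw [Nat.mod_eq_sub_mod (by omega), show 2 * a + b - 2 * b = 2 * a - b by omega]
    exact Nat.mod_eq_of_lt (by omega)

/-- For even `m ≥ 6` and `1 ≤ a < m/2` with `a ≠ m/4`, the set `{a, m/2, m/2 + a}` is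
admissible with diversity exactly 6. -/
theorem stmt_16 (m a : ℕ) (hm : 6 ≤ m) (heven : 2 ∣ m)
    (ha1 : 1 ≤ a) (ha2 : a < m / 2) (ha4 : 4 * a ≠ m) :
    Admissible m {a, m / 2, m / 2 + a} ∧ diversity m {a, m / 2, m / 2 + a} = 6 := by
  obtain ⟨b, rfl⟩ : ∃ b, m = 2 * b := ⟨m / 2, by omega⟩
  have hb : 2 * b / 2 = b := by omega
  rw [hb] at ha2 ⊢
  have hb3 : 3 ≤ b := by omega
  have h2ab : 2 * a ≠ b := by omega
  have hxy : a ≠ b := by omega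
  have hxz : a ≠ b + a := by omega
  have hyz : b ≠ b + a := by omega
  clear hm heven ha4 hb
  -- sums of all subsets
  have s1 : ({a} : Finset ℕ).sum id = a := by simp
  have s2 : ({b} : Finset ℕ).sum id = b := by simp
  have s3 : ({b + a} : Finset ℕ).sum id = b + a := by simp
  have s12 : ({a, b} : Finset ℕ).sum id = a + b := Finset.sum_pair hxy
  have s13 : ({a, b + a} : Finset ℕ).sum id = 2 * a + b := by
    rw [Finset.sum_pair hxz]; simp; clear * - ; omega
  have s23 : ({b, b + a} : Finset ℕ).sum id = a + 2 * b := by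
    rw [Finset.sum_pair hyz]; simp; clear * - ; omega
  have s123 : ({a, b, b + a} : Finset ℕ).sum id = 2 * a + 2 * b := by
    rw [Finset.sum_insert (by simp [hxy, hxz]; omega), Finset.sum_pair hyz]; simp; clear * -; omega
  -- residues
  have r1 : a % (2 * b) = a := Nat.mod_eq_of_lt (by clear * - ha2; omega)
  have r2 : b % (2 * b) = b := Nat.mod_eq_of_lt (by clear * - hb3; omega)
  have r3 : (b + a) % (2 * b) = b + a := Nat.mod_eq_of_lt (by clear * - ha2; omega)
  have r12 : (a + b) % (2 * b) = b + a := by rw [Nat.add_comm]; exact r3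
  have r23 : (a + 2 * b) % (2 * b) = a := by rw [Nat.add_mod_right]; exact r1
  have r123 : (2 * a + 2 * b) % (2 * b) = 2 * a := by
    rw [Nat.add_mod_right]; exact Nat.mod_eq_of_lt (by clear * - ha2; omega)
  obtain ⟨r, hr, hr1, hr2, hr3, hr4, hr5⟩ := rexists a b ha1 ha2 h2ab hb3
  constructor
  · constructor
    · intro x hx
      simp only [Finset.mem_insert, Finset.mem_singleton] at hx
      simp only [Finset.mem_Icc]
      rcases hx with rfl | rfl | rfl <;> (clear * - ha1 ha2 hb3; omega)
    · intro U hU hne hdvd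
      have hmod : U.sum id % (2 * b) = 0 := Nat.mod_eq_zero_of_dvd hdvd
      rcases subsets_three U hU with rfl | rfl | rfl | rfl | rfl | rfl | rfl | rfl
      · exact absurd rfl (Finset.nonempty_iff_ne_empty.1 hne)
      · rw [s1, r1] at hmod; clear * - hmod ha1; omega
      · rw [s2, r2] at hmod; clear * - hmod hb3; omega
      · rw [s3, r3] at hmod; clear * - hmod hb3; omega
      · rw [s12, r12] at hmod; clear * - hmod hb3; omega
      · rw [s13, hr] at hmod; clear * - hmod hr1; omega
      · rw [s23, r23] at hmod; clear * - hmod ha1; omega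
      · rw [s123, r123] at hmod; clear * - hmod ha1; omega
  · have hpow : ({a, b, b + a} : Finset ℕ).powerset =
        {∅, {a}, {b}, {b + a}, {a, b}, {a, b + a}, {b, b + a}, {a, b, b + a}} := by
      ext U
      simp only [Finset.mem_powerset, Finset.mem_insert, Finset.mem_singleton]
      constructor
      · exact subsets_three U
      · rintro (rfl | rfl | rfl | rfl | rfl | rfl | rfl | rfl) <;>
          simp [Finset.insert_subset_iff, Finset.subset_iff]
    unfold diversity
    rw [hpow]
    simp only [Finset.image_insert, Finset.image_singleton, s1, s2, s3, s12, s13, s23, s123,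
      Finset.sum_empty, Nat.zero_mod, r1, r2, r3, r12, r23, r123, hr]
    have hset : ({0, a, b, b + a, b + a, r, a, 2 * a} : Finset ℕ) =
        {0, a, 2 * a, b, b + a, r} := by
      ext u
      simp only [Finset.mem_insert, Finset.mem_singleton]
      clear * - ha1 ha2 hb3 h2ab hr1 hr2 hr3 hr4 hr5
      omega
    rw [hset, Finset.card_insert_of_notMem (by clear * - ha1 ha2 hb3 h2ab hr1 hr2 hr3 hr4 hr5; simp; omega),
      Finset.card_insert_of_notMem (by clear * - ha1 ha2 hb3 h2ab hr1 hr2 hr3 hr4 hr5; simp; omega),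
      Finset.card_insert_of_notMem (by clear * - ha1 ha2 hb3 h2ab hr1 hr2 hr3 hr4 hr5; simp; omega),
      Finset.card_insert_of_notMem (by clear * - ha1 ha2 hb3 h2ab hr1 hr2 hr3 hr4 hr5; simp; omega),
      Finset.card_insert_of_notMem (by clear * - ha1 ha2 hb3 h2ab hr1 hr2 hr3 hr4 hr5; simp; omega),
      Finset.card_singleton]
end

section
/- Let m ≥ 6 be odd and T ⊆ {1,…,m−1} admissible with #T = 3. Then the subset sums of T represent at least 7 distinct residue classes mod m. -/
lemma seven_le_card {S : Finset ℕ} {x0 x1 x2 x3 x4 x5 x6 : ℕ}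
    (h0 : x0 ∈ S) (h1 : x1 ∈ S) (h2 : x2 ∈ S) (h3 : x3 ∈ S) (h4 : x4 ∈ S)
    (h5 : x5 ∈ S) (h6 : x6 ∈ S)
    (d01 : x0 ≠ x1) (d02 : x0 ≠ x2) (d03 : x0 ≠ x3) (d04 : x0 ≠ x4) (d05 : x0 ≠ x5)
    (d06 : x0 ≠ x6)
    (d12 : x1 ≠ x2) (d13 : x1 ≠ x3) (d14 : x1 ≠ x4) (d15 : x1 ≠ x5) (d16 : x1 ≠ x6)
    (d23 : x2 ≠ x3) (d24 : x2 ≠ x4) (d25 : x2 ≠ x5) (d26 : x2 ≠ x6)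
    (d34 : x3 ≠ x4) (d35 : x3 ≠ x5) (d36 : x3 ≠ x6)
    (d45 : x4 ≠ x5) (d46 : x4 ≠ x6) (d56 : x5 ≠ x6) :
    7 ≤ S.card := by
  have hsub : ({x0, x1, x2, x3, x4, x5, x6} : Finset ℕ) ⊆ S := by
    simp only [Finset.insert_subset_iff, Finset.singleton_subset_iff]
    exact ⟨h0, h1, h2, h3, h4, h5, h6⟩
  have hc : ({x0, x1, x2, x3, x4, x5, x6} : Finset ℕ).card = 7 := by
    rw [Finset.card_insert_of_notMem (by simp [d01, d02, d03, d04, d05, d06]),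
        Finset.card_insert_of_notMem (by simp [d12, d13, d14, d15, d16]),
        Finset.card_insert_of_notMem (by simp [d23, d24, d25, d26]),
        Finset.card_insert_of_notMem (by simp [d34, d35, d36]),
        Finset.card_insert_of_notMem (by simp [d45, d46]),
        Finset.card_insert_of_notMem (by simp [d56]),
        Finset.card_singleton]
  have := Finset.card_le_card hsub
  omega

lemma mod_ne_of_cast_ne (m x y : ℕ) (h : (x : ZMod m) ≠ y) : x % m ≠ y % m :=
  fun hc => h ((ZMod.natCast_eq_natCast_iff _ _ _).mpr hc)

lemma half_cancel {m : ℕ} (hodd : Odd m) {x : ZMod m} (h : 2 * x = 0) : x = 0 := by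
  have hu : IsUnit (2 : ZMod m) := by
    have : ((2 : ℕ) : ZMod m) = (2 : ZMod m) := by push_cast; ring
    rw [← this, ZMod.isUnit_iff_coprime]
    exact hodd.coprime_two_left
  obtain ⟨u, hu⟩ := hu
  have h2 : (u : ZMod m) * x = 0 := by rw [hu]; exact h
  calc x = ↑u⁻¹ * (↑u * x) := by rw [← mul_assoc, Units.inv_mul, one_mul]
    _ = 0 := by rw [h2, mul_zero]

set_option maxHeartbeats 1000000 in
/-- For odd `m ≥ 6` and `T ⊆ {1,…,m−1}` admissible with `#T = 3`, the subset sums of `T`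
represent at least 7 residue classes mod `m`. -/
theorem stmt_17 (m : ℕ) (hm : 6 ≤ m) (hodd : Odd m)
    (T : Finset ℕ) (hT : Admissible m T) (hcard : T.card = 3) :
    7 ≤ diversity m T := by
  obtain ⟨a, b, c, hab, hac, hbc, hTeq⟩ := Finset.card_eq_three.mp hcard
  -- bounds
  have hamem : a ∈ Finset.Icc 1 (m - 1) := hT.1 (by rw [hTeq]; simp)
  have hbmem : b ∈ Finset.Icc 1 (m - 1) := hT.1 (by rw [hTeq]; simp)
  have hcmem : c ∈ Finset.Icc 1 (m - 1) := hT.1 (by rw [hTeq]; simp)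
  rw [Finset.mem_Icc] at hamem hbmem hcmem
  have ham : a < m := by omega
  have hbm : b < m := by omega
  have hcm : c < m := by omega
  -- subsets of T
  have hsa : ({a} : Finset ℕ) ⊆ T := by rw [hTeq]; intro x hx; simp at hx; simp [hx]
  have hsb : ({b} : Finset ℕ) ⊆ T := by rw [hTeq]; intro x hx; simp at hx; simp [hx]
  have hsc : ({c} : Finset ℕ) ⊆ T := by rw [hTeq]; intro x hx; simp at hx; simp [hx]
  have hsab : ({a, b} : Finset ℕ) ⊆ T := by
    rw [hTeq]; intro x hx; simp at hx ⊢; tauto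
  have hsac : ({a, c} : Finset ℕ) ⊆ T := by
    rw [hTeq]; intro x hx; simp at hx ⊢; tauto
  have hsbc : ({b, c} : Finset ℕ) ⊆ T := by
    rw [hTeq]; intro x hx; simp at hx ⊢; tauto
  -- sums
  have hsumab : ({a, b} : Finset ℕ).sum id = a + b := by
    rw [Finset.sum_pair hab]; rfl
  have hsumac : ({a, c} : Finset ℕ).sum id = a + c := by
    rw [Finset.sum_pair hac]; rfl
  have hsumbc : ({b, c} : Finset ℕ).sum id = b + c := by
    rw [Finset.sum_pair hbc]; rfl
  have hsumT : T.sum id = a + b + c := by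
    rw [hTeq, Finset.sum_insert (by simp [hab, hac]),
        Finset.sum_insert (by simp [hbc]), Finset.sum_singleton]
    simp [id]
    ring
  -- non-divisibility facts
  have hna : ¬ m ∣ a := by
    have := hT.2 {a} hsa ⟨a, by simp⟩; simpa using this
  have hnb : ¬ m ∣ b := by
    have := hT.2 {b} hsb ⟨b, by simp⟩; simpa using this
  have hnc : ¬ m ∣ c := by
    have := hT.2 {c} hsc ⟨c, by simp⟩; simpa using this
  have hnab : ¬ m ∣ (a + b) := by
    have := hT.2 {a, b} hsab ⟨a, by simp⟩; rwa [hsumab] at this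
  have hnac : ¬ m ∣ (a + c) := by
    have := hT.2 {a, c} hsac ⟨a, by simp⟩; rwa [hsumac] at this
  have hnbc : ¬ m ∣ (b + c) := by
    have := hT.2 {b, c} hsbc ⟨b, by simp⟩; rwa [hsumbc] at this
  have hnabc : ¬ m ∣ (a + b + c) := by
    have := hT.2 T (le_refl T) ⟨a, by rw [hTeq]; simp⟩; rwa [hsumT] at this
  -- ZMod facts
  have hA0 : (a : ZMod m) ≠ 0 := by
    rw [Ne, ZMod.natCast_eq_zero_iff]; exact hna
  have hB0 : (b : ZMod m) ≠ 0 := by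
    rw [Ne, ZMod.natCast_eq_zero_iff]; exact hnb
  have hC0 : (c : ZMod m) ≠ 0 := by
    rw [Ne, ZMod.natCast_eq_zero_iff]; exact hnc
  have hAB0 : (a : ZMod m) + b ≠ 0 := by
    intro h; apply hnab; rw [← ZMod.natCast_eq_zero_iff]; push_cast; exact h
  have hAC0 : (a : ZMod m) + c ≠ 0 := by
    intro h; apply hnac; rw [← ZMod.natCast_eq_zero_iff]; push_cast; exact h
  have hBC0 : (b : ZMod m) + c ≠ 0 := by
    intro h; apply hnbc; rw [← ZMod.natCast_eq_zero_iff]; push_cast; exact h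
  have hABC0 : (a : ZMod m) + b + c ≠ 0 := by
    intro h; apply hnabc; rw [← ZMod.natCast_eq_zero_iff]; push_cast; exact h
  have hABne : (a : ZMod m) ≠ b := by
    intro h
    have h2 : a % m = b % m := (ZMod.natCast_eq_natCast_iff _ _ _).mp h
    rw [Nat.mod_eq_of_lt ham, Nat.mod_eq_of_lt hbm] at h2
    exact hab h2
  have hACne : (a : ZMod m) ≠ c := by
    intro h
    have h2 : a % m = c % m := (ZMod.natCast_eq_natCast_iff _ _ _).mp h
    rw [Nat.mod_eq_of_lt ham, Nat.mod_eq_of_lt hcm] at h2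
    exact hac h2
  have hBCne : (b : ZMod m) ≠ c := by
    intro h
    have h2 : b % m = c % m := (ZMod.natCast_eq_natCast_iff _ _ _).mp h
    rw [Nat.mod_eq_of_lt hbm, Nat.mod_eq_of_lt hcm] at h2
    exact hbc h2
  -- memberships in the image
  unfold diversity
  set S := T.powerset.image (fun U => U.sum id % m) with hS
  have m0 : 0 % m ∈ S := Finset.mem_image.mpr
    ⟨∅, Finset.mem_powerset.mpr (Finset.empty_subset T), by simp⟩
  have mA : a % m ∈ S := Finset.mem_image.mpr
    ⟨{a}, Finset.mem_powerset.mpr hsa, by simp⟩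
  have mB : b % m ∈ S := Finset.mem_image.mpr
    ⟨{b}, Finset.mem_powerset.mpr hsb, by simp⟩
  have mC : c % m ∈ S := Finset.mem_image.mpr
    ⟨{c}, Finset.mem_powerset.mpr hsc, by simp⟩
  have mAB : (a + b) % m ∈ S := Finset.mem_image.mpr
    ⟨{a, b}, Finset.mem_powerset.mpr hsab, by rw [hsumab]⟩
  have mAC : (a + c) % m ∈ S := Finset.mem_image.mpr
    ⟨{a, c}, Finset.mem_powerset.mpr hsac, by rw [hsumac]⟩
  have mBC : (b + c) % m ∈ S := Finset.mem_image.mpr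
    ⟨{b, c}, Finset.mem_powerset.mpr hsbc, by rw [hsumbc]⟩
  have mABC : (a + b + c) % m ∈ S := Finset.mem_image.mpr
    ⟨T, Finset.mem_powerset.mpr (le_refl T), by rw [hsumT]⟩
  by_cases hd1 : (a : ZMod m) = (b : ZMod m) + c
  · -- collision a ≡ b + c possible; derive the other two are impossible
    have hn2 : (b : ZMod m) ≠ (a : ZMod m) + c := by
      intro h
      have h2 : (2 : ZMod m) * ((a : ZMod m) - b) = 0 := by linear_combination hd1 - h
      exact hABne (by linear_combination half_cancel hodd h2)
    have hn3 : (c : ZMod m) ≠ (a : ZMod m) + b := by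
      intro h
      have h2 : (2 : ZMod m) * ((a : ZMod m) - c) = 0 := by linear_combination hd1 - h
      exact hACne (by linear_combination half_cancel hodd h2)
    apply seven_le_card m0 mA mB mC mAB mAC mABC <;>
      · refine mod_ne_of_cast_ne m _ _ ?_
        push_cast
        intro h
        first
        | exact hA0 (by linear_combination h)
        | exact hA0 (by linear_combination -h)
        | exact hB0 (by linear_combination h)
        | exact hB0 (by linear_combination -h)
        | exact hC0 (by linear_combination h)
        | exact hC0 (by linear_combination -h)
        | exact hAB0 (by linear_combination h)
        | exact hAB0 (by linear_combination -h)
        | exact hAC0 (by linear_combination h)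
        | exact hAC0 (by linear_combination -h)
        | exact hBC0 (by linear_combination h)
        | exact hBC0 (by linear_combination -h)
        | exact hABC0 (by linear_combination h)
        | exact hABC0 (by linear_combination -h)
        | exact hABne (by linear_combination h)
        | exact hABne (by linear_combination -h)
        | exact hACne (by linear_combination h)
        | exact hACne (by linear_combination -h)
        | exact hBCne (by linear_combination h)
        | exact hBCne (by linear_combination -h)
        | exact hn2 (by linear_combination h)
        | exact hn2 (by linear_combination -h)
        | exact hn3 (by linear_combination h)
        | exact hn3 (by linear_combination -h)
  · by_cases hd2 : (b : ZMod m) = (a : ZMod m) + c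
    · -- collision b ≡ a + c; derive c ≢ a + b
      have hn3 : (c : ZMod m) ≠ (a : ZMod m) + b := by
        intro h
        have h2 : (2 : ZMod m) * ((b : ZMod m) - c) = 0 := by linear_combination hd2 - h
        exact hBCne (by linear_combination half_cancel hodd h2)
      apply seven_le_card m0 mA mB mC mAB mBC mABC <;>
        · refine mod_ne_of_cast_ne m _ _ ?_
          push_cast
          intro h
          first
          | exact hA0 (by linear_combination h)
          | exact hA0 (by linear_combination -h)
          | exact hB0 (by linear_combination h)
          | exact hB0 (by linear_combination -h)
          | exact hC0 (by linear_combination h)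
          | exact hC0 (by linear_combination -h)
          | exact hAB0 (by linear_combination h)
          | exact hAB0 (by linear_combination -h)
          | exact hAC0 (by linear_combination h)
          | exact hAC0 (by linear_combination -h)
          | exact hBC0 (by linear_combination h)
          | exact hBC0 (by linear_combination -h)
          | exact hABC0 (by linear_combination h)
          | exact hABC0 (by linear_combination -h)
          | exact hABne (by linear_combination h)
          | exact hABne (by linear_combination -h)
          | exact hACne (by linear_combination h)
          | exact hACne (by linear_combination -h)
          | exact hBCne (by linear_combination h)
          | exact hBCne (by linear_combination -h)
          | exact hd1 (by linear_combination h)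
          | exact hd1 (by linear_combination -h)
          | exact hn3 (by linear_combination h)
          | exact hn3 (by linear_combination -h)
    · -- no collision for a and b
      apply seven_le_card m0 mA mB mC mAC mBC mABC <;>
        · refine mod_ne_of_cast_ne m _ _ ?_
          push_cast
          intro h
          first
          | exact hA0 (by linear_combination h)
          | exact hA0 (by linear_combination -h)
          | exact hB0 (by linear_combination h)
          | exact hB0 (by linear_combination -h)
          | exact hC0 (by linear_combination h)
          | exact hC0 (by linear_combination -h)
          | exact hAB0 (by linear_combination h)
          | exact hAB0 (by linear_combination -h)
          | exact hAC0 (by linear_combination h)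
          | exact hAC0 (by linear_combination -h)
          | exact hBC0 (by linear_combination h)
          | exact hBC0 (by linear_combination -h)
          | exact hABC0 (by linear_combination h)
          | exact hABC0 (by linear_combination -h)
          | exact hABne (by linear_combination h)
          | exact hABne (by linear_combination -h)
          | exact hACne (by linear_combination h)
          | exact hACne (by linear_combination -h)
          | exact hBCne (by linear_combination h)
          | exact hBCne (by linear_combination -h)
          | exact hd1 (by linear_combination h)
          | exact hd1 (by linear_combination -h)
          | exact hd2 (by linear_combination h)
          | exact hd2 (by linear_combination -h)
end

section
/- Let m ≥ 6 be even and T ⊆ {1,…,m−1} admissible with #T = 3 and Δ_m(T) = 6. Then T = {a, m/2, m/2 + a} for some a with 1 ≤ a < m/2 and a ≠ m/4. -/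
theorem seven_card (m : ℕ) (a b c : ZMod m)
    (h0a : a ≠ 0) (h0b : b ≠ 0) (h0c : c ≠ 0)
    (hab0 : a + b ≠ 0) (hac0 : a + c ≠ 0) (hbc0 : b + c ≠ 0)
    (habc0 : a + b + c ≠ 0)
    (hab : a ≠ b) (hac : a ≠ c) (hbc : b ≠ c)
    (h1 : a ≠ b + c) (h2 : b ≠ a + c) :
    ({0, a, b, c, a + c, b + c, a + b + c} : Finset (ZMod m)).card = 7 := by
  have habc0' : a + (b + c) ≠ 0 := by rwa [← add_assoc]
  have n1 : a ≠ a + c := fun h => h0c (by linear_combination -h)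
  have n2 : a ≠ a + b + c := fun h => hbc0 (by linear_combination -h)
  have n3 : b ≠ b + c := fun h => h0c (by linear_combination -h)
  have n4 : b ≠ a + b + c := fun h => hac0 (by linear_combination -h)
  have n5 : c ≠ a + c := fun h => h0a (by linear_combination -h)
  have n6 : c ≠ b + c := fun h => h0b (by linear_combination -h)
  have n7 : c ≠ a + b + c := fun h => hab0 (by linear_combination -h)
  have n8 : a + c ≠ b + c := fun h => hab (by linear_combination h)
  have n9 : a + c ≠ a + b + c := fun h => h0b (by linear_combination -h)
  have n10 : b + c ≠ a + b + c := fun h => h0a (by linear_combination -h)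
  rw [Finset.card_insert_of_notMem (by simp [eq_comm, *, add_assoc]),
    Finset.card_insert_of_notMem (by simp [*]),
    Finset.card_insert_of_notMem (by simp [*]),
    Finset.card_insert_of_notMem (by simp [*]),
    Finset.card_insert_of_notMem (by simp [*]),
    Finset.card_insert_of_notMem (by simp [*]),
    Finset.card_singleton]

theorem powerset_image_eq (x y z : ℕ) (hxy : x ≠ y) (hxz : x ≠ z) (hyz : y ≠ z) (m : ℕ) :
    (({x, y, z} : Finset ℕ).powerset.image (fun U => ((U.sum id : ℕ) : ZMod m)))
      = {0, (x : ZMod m), (y : ZMod m), (z : ZMod m), (x : ZMod m) + y, (x : ZMod m) + z,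
          (y : ZMod m) + z, (x : ZMod m) + y + z} := by
  have hp : ({x, y, z} : Finset ℕ).powerset
      = {∅, {x}, {y}, {z}, {x, y}, {x, z}, {y, z}, {x, y, z}} := by
    rw [Finset.powerset_insert, Finset.powerset_insert]
    rw [show ({z} : Finset ℕ).powerset = {∅, {z}} from rfl]
    ext U
    simp [Finset.mem_union, Finset.mem_image]
    tauto
  rw [hp]
  simp [Finset.image_insert, Finset.sum_pair, hxy, hxz, hyz, Finset.sum_insert, add_assoc]

theorem pivot_helper (m : ℕ) (hm : 6 ≤ m) (heven : 2 ∣ m) (x y z : ℕ)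
    (hx1 : 1 ≤ x) (hx2 : x ≤ m - 1) (hy1 : 1 ≤ y) (hy2 : y ≤ m - 1)
    (hz1 : 1 ≤ z) (hz2 : z ≤ m - 1)
    (hc2 : (y : ZMod m) = (x : ZMod m) + z) (hc3 : (z : ZMod m) = (x : ZMod m) + y)
    (hyz : ¬ m ∣ (y + z)) :
    ∃ a : ℕ, 1 ≤ a ∧ a < m / 2 ∧ 4 * a ≠ m ∧
      ({x, y, z} : Finset ℕ) = {a, m / 2, m / 2 + a} := by
  have h2x : ((2 * x : ℕ) : ZMod m) = 0 := by push_cast; linear_combination -hc2 - hc3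
  have hdvd : m ∣ 2 * x := (ZMod.natCast_eq_zero_iff _ _).mp h2x
  have hx : 2 * x = m := by
    rcases hdvd with ⟨k, hk⟩
    have hk0 : k ≠ 0 := by rintro rfl; omega
    have hk2 : k < 2 := by
      by_contra h
      push_neg at h
      have := Nat.mul_le_mul_left m h
      omega
    have hk1 : k = 1 := by omega
    subst hk1
    omega
  have hzxy : z % m = (x + y) % m :=
    (ZMod.natCast_eq_natCast_iff' z (x + y) m).mp (by push_cast; linear_combination hc3)
  rw [Nat.mod_eq_of_lt (show z < m by omega)] at hzxy
  have hcases : z = x + y ∨ y = z + x := by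
    rcases Nat.lt_or_ge (x + y) m with h | h
    · rw [Nat.mod_eq_of_lt h] at hzxy; left; exact hzxy
    · rw [Nat.mod_eq_sub_mod h, Nat.mod_eq_of_lt (by omega)] at hzxy
      right; omega
  rcases hcases with h | h
  · refine ⟨y, hy1, by omega, ?_, ?_⟩
    · intro h4; exact hyz ⟨1, by omega⟩
    · ext t; simp; omega
  · refine ⟨z, hz1, by omega, ?_, ?_⟩
    · intro h4; exact hyz ⟨1, by omega⟩
    · ext t; simp; omega

set_option maxHeartbeats 2000000 in
/-- For even `m ≥ 6` and `T ⊆ {1,…,m−1}` admissible with `#T = 3` and `Δ_m(T) = 6`,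
we have `T = {a, m/2, m/2 + a}` for some `a` with `1 ≤ a < m/2`, `a ≠ m/4`. -/
theorem stmt_18 (m : ℕ) (hm : 6 ≤ m) (heven : 2 ∣ m)
    (T : Finset ℕ) (hT : Admissible m T) (hcard : T.card = 3)
    (hdiv : diversity m T = 6) :
    ∃ a : ℕ, 1 ≤ a ∧ a < m / 2 ∧ 4 * a ≠ m ∧ T = {a, m / 2, m / 2 + a} := by
  obtain ⟨x, y, z, hxy, hxz, hyz, hTxyz⟩ := Finset.card_eq_three.mp hcard
  obtain ⟨hsub, hadm⟩ := hT
  have hxI : x ∈ Finset.Icc 1 (m - 1) := hsub (by simp [hTxyz])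
  have hyI : y ∈ Finset.Icc 1 (m - 1) := hsub (by simp [hTxyz])
  have hzI : z ∈ Finset.Icc 1 (m - 1) := hsub (by simp [hTxyz])
  simp only [Finset.mem_Icc] at hxI hyI hzI
  -- admissibility facts
  have d1 : ¬ m ∣ x := by simpa using hadm {x} (by simp [hTxyz]) ⟨x, by simp⟩
  have d2 : ¬ m ∣ y := by simpa using hadm {y} (by simp [hTxyz]) ⟨y, by simp⟩
  have d3 : ¬ m ∣ z := by simpa using hadm {z} (by simp [hTxyz]) ⟨z, by simp⟩
  have d12 : ¬ m ∣ (x + y) := by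
    have := hadm {x, y} (by intro t ht; simp at ht; rcases ht with rfl | rfl <;> simp [hTxyz])
      ⟨x, by simp⟩
    rwa [Finset.sum_pair hxy] at this
  have d13 : ¬ m ∣ (x + z) := by
    have := hadm {x, z} (by intro t ht; simp at ht; rcases ht with rfl | rfl <;> simp [hTxyz])
      ⟨x, by simp⟩
    rwa [Finset.sum_pair hxz] at this
  have d23 : ¬ m ∣ (y + z) := by
    have := hadm {y, z} (by intro t ht; simp at ht; rcases ht with rfl | rfl <;> simp [hTxyz])
      ⟨y, by simp⟩
    rwa [Finset.sum_pair hyz] at this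
  have d123 : ¬ m ∣ (x + y + z) := by
    have := hadm {x, y, z} (by rw [hTxyz]) ⟨x, by simp⟩
    rwa [show ({x, y, z} : Finset ℕ).sum id = x + y + z by
      rw [Finset.sum_insert (by simp [hxy, hxz]), Finset.sum_pair hyz, ← add_assoc]; rfl]
      at this
  -- pass to ZMod
  have z1 : (x : ZMod m) ≠ 0 := fun h => d1 ((ZMod.natCast_eq_zero_iff _ _).mp h)
  have z2 : (y : ZMod m) ≠ 0 := fun h => d2 ((ZMod.natCast_eq_zero_iff _ _).mp h)
  have z3 : (z : ZMod m) ≠ 0 := fun h => d3 ((ZMod.natCast_eq_zero_iff _ _).mp h)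
  have z12 : (x : ZMod m) + y ≠ 0 := fun h =>
    d12 ((ZMod.natCast_eq_zero_iff _ _).mp (by push_cast; exact h))
  have z13 : (x : ZMod m) + z ≠ 0 := fun h =>
    d13 ((ZMod.natCast_eq_zero_iff _ _).mp (by push_cast; exact h))
  have z23 : (y : ZMod m) + z ≠ 0 := fun h =>
    d23 ((ZMod.natCast_eq_zero_iff _ _).mp (by push_cast; exact h))
  have z123 : (x : ZMod m) + y + z ≠ 0 := fun h =>
    d123 ((ZMod.natCast_eq_zero_iff _ _).mp (by push_cast; exact h))
  have e12 : (x : ZMod m) ≠ (y : ZMod m) := fun h => by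
    have := (ZMod.natCast_eq_natCast_iff' x y m).mp h
    rw [Nat.mod_eq_of_lt (by omega), Nat.mod_eq_of_lt (by omega)] at this
    exact hxy this
  have e13 : (x : ZMod m) ≠ (z : ZMod m) := fun h => by
    have := (ZMod.natCast_eq_natCast_iff' x z m).mp h
    rw [Nat.mod_eq_of_lt (by omega), Nat.mod_eq_of_lt (by omega)] at this
    exact hxz this
  have e23 : (y : ZMod m) ≠ (z : ZMod m) := fun h => by
    have := (ZMod.natCast_eq_natCast_iff' y z m).mp h
    rw [Nat.mod_eq_of_lt (by omega), Nat.mod_eq_of_lt (by omega)] at this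
    exact hyz this
  -- compute the diversity set
  have hcast : (T.powerset.image (fun U => ((U.sum id : ℕ) : ZMod m)))
      = (T.powerset.image (fun U => U.sum id % m)).image (Nat.cast : ℕ → ZMod m) := by
    rw [Finset.image_image]
    apply Finset.image_congr
    intro U _
    simp [Function.comp, ZMod.natCast_mod]
  have hinj : Set.InjOn (Nat.cast : ℕ → ZMod m)
      ((T.powerset.image (fun U => U.sum id % m)) : Finset ℕ) := by
    intro u hu v hv h
    simp only [Finset.coe_image, Set.mem_image] at hu hv
    obtain ⟨U, _, hU⟩ := hu
    obtain ⟨V, _, hV⟩ := hv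
    have hum : u < m := hU ▸ Nat.mod_lt _ (by omega)
    have hvm : v < m := hV ▸ Nat.mod_lt _ (by omega)
    have := (ZMod.natCast_eq_natCast_iff' u v m).mp h
    rwa [Nat.mod_eq_of_lt hum, Nat.mod_eq_of_lt hvm] at this
  have hS : ({0, (x : ZMod m), (y : ZMod m), (z : ZMod m), (x : ZMod m) + y, (x : ZMod m) + z,
      (y : ZMod m) + z, (x : ZMod m) + y + z} : Finset (ZMod m)).card = 6 := by
    rw [← powerset_image_eq x y z hxy hxz hyz m, ← hTxyz, hcast,
      Finset.card_image_of_injOn hinj]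
    exact hdiv
  -- the three "not both false" facts
  have hcontra : ∀ S7 : Finset (ZMod m), S7.card = 7 →
      S7 ⊆ {0, (x : ZMod m), (y : ZMod m), (z : ZMod m), (x : ZMod m) + y, (x : ZMod m) + z,
        (y : ZMod m) + z, (x : ZMod m) + y + z} → False := by
    intro S7 h7 hsub7
    have := Finset.card_le_card hsub7
    omega
  have hB12 : (x : ZMod m) = (y : ZMod m) + z ∨ (y : ZMod m) = (x : ZMod m) + z := by
    by_contra hcon
    push_neg at hcon
    refine hcontra _ (seven_card m x y z z1 z2 z3 z12 z13 z23 z123 e12 e13 e23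
      hcon.1 hcon.2) ?_
    intro t ht
    simp only [Finset.mem_insert, Finset.mem_singleton] at ht ⊢
    rcases ht with rfl|rfl|rfl|rfl|rfl|rfl|rfl <;> simp
  have hB13 : (x : ZMod m) = (y : ZMod m) + z ∨ (z : ZMod m) = (x : ZMod m) + y := by
    by_contra hcon
    push_neg at hcon
    have h7 := seven_card m x z y z1 z3 z2 z13 z12 (by rwa [add_comm])
      (by rwa [add_right_comm]) e13 e12 (fun h => e23 h.symm)
      (by rw [add_comm (z : ZMod m) (y : ZMod m)]; exact hcon.1) hcon.2
    rw [add_comm (z : ZMod m) (y : ZMod m), add_right_comm (x : ZMod m) (z : ZMod m)] at h7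
    refine hcontra _ h7 ?_
    intro t ht
    simp only [Finset.mem_insert, Finset.mem_singleton] at ht ⊢
    rcases ht with rfl|rfl|rfl|rfl|rfl|rfl|rfl <;> simp
  have hB23 : (y : ZMod m) = (x : ZMod m) + z ∨ (z : ZMod m) = (x : ZMod m) + y := by
    by_contra hcon
    push_neg at hcon
    have h7 := seven_card m y z x z2 z3 z1 z23 (by rwa [add_comm]) (by rwa [add_comm])
      (by rw [show (y : ZMod m) + z + x = (x : ZMod m) + y + z by ring]; exact z123) e23
      (fun h => e12 h.symm) (fun h => e13 h.symm)
      (by rw [add_comm (z : ZMod m) (x : ZMod m)]; exact hcon.1)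
      (by rw [add_comm (y : ZMod m) (x : ZMod m)]; exact hcon.2)
    rw [add_comm (z : ZMod m) (x : ZMod m), add_comm (y : ZMod m) (x : ZMod m),
      show (y : ZMod m) + z + x = (x : ZMod m) + y + z by ring] at h7
    refine hcontra _ h7 ?_
    intro t ht
    simp only [Finset.mem_insert, Finset.mem_singleton] at ht ⊢
    rcases ht with rfl|rfl|rfl|rfl|rfl|rfl|rfl <;> simp
  -- case analysis: at least two congruences hold
  by_cases hc1 : (x : ZMod m) = (y : ZMod m) + z
  · by_cases hc2 : (y : ZMod m) = (x : ZMod m) + z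
    · -- pivot z
      obtain ⟨a, h1, h2, h3, h4⟩ := pivot_helper m hm heven z x y hzI.1 hzI.2 hxI.1 hxI.2
        hyI.1 hyI.2 (by rw [add_comm]; exact hc1) (by rw [add_comm]; exact hc2) d12
      refine ⟨a, h1, h2, h3, ?_⟩
      rw [hTxyz, show ({x, y, z} : Finset ℕ) = {z, x, y} by ext t; simp only [Finset.mem_insert, Finset.mem_singleton]; omega, h4]
    · have hc3 := hB23.resolve_left hc2
      -- pivot y
      obtain ⟨a, h1, h2, h3, h4⟩ := pivot_helper m hm heven y x z hyI.1 hyI.2 hxI.1 hxI.2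
        hzI.1 hzI.2 hc1 (by rw [add_comm]; exact hc3) d13
      refine ⟨a, h1, h2, h3, ?_⟩
      rw [hTxyz, show ({x, y, z} : Finset ℕ) = {y, x, z} by ext t; simp only [Finset.mem_insert, Finset.mem_singleton]; omega, h4]
  · have hc2 := hB12.resolve_left hc1
    have hc3 := hB13.resolve_left hc1
    -- pivot x
    obtain ⟨a, h1, h2, h3, h4⟩ := pivot_helper m hm heven x y z hxI.1 hxI.2 hyI.1 hyI.2
      hzI.1 hzI.2 hc2 hc3 d23
    exact ⟨a, h1, h2, h3, by rw [hTxyz, h4]⟩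
end

section
/- Let r ≥ 4 and m ≥ 2r + 1, and let T ⊆ {1,…,m−1} with #T = r be admissible. Then the 2^r subset sums of T represent at least 2r + 1 distinct residue classes mod m. -/
open Finset

/-- Two-torsion in `ZMod m` has at most one nonzero element. -/
lemma two_torsion_unique {m : ℕ} [NeZero m] (z z' : ZMod m)
    (hz : z ≠ 0) (hz' : z' ≠ 0) (h2 : z + z = 0) (h2' : z' + z' = 0) : z = z' := by
  have key : ∀ w : ZMod m, w ≠ 0 → w + w = 0 → 2 * w.val = m := by
    intro w hw hww
    have hdvd : m ∣ 2 * w.val := by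
      rw [← ZMod.natCast_eq_zero_iff]
      push_cast
      rw [ZMod.natCast_val, ZMod.cast_id]
      linear_combination hww
    have hlt : w.val < m := ZMod.val_lt w
    have hne : w.val ≠ 0 := by
      simpa [ZMod.val_eq_zero] using hw
    obtain ⟨c, hc⟩ := hdvd
    have hc2 : c < 2 := by
      by_contra hcc
      push_neg at hcc
      have : m * 2 ≤ m * c := Nat.mul_le_mul_left m hcc
      omega
    interval_cases c <;> omega
  have h1 := key z hz h2
  have h2 := key z' hz' h2'
  exact ZMod.val_injective m (by omega)

lemma sum_erase_zmod {m : ℕ} (W : Finset (ZMod m)) (t : ZMod m) (ht : t ∈ W) :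
    (W.erase t).sum id = W.sum id - t := by
  have h := Finset.sum_erase_add W id ht
  simp only [id] at h ⊢
  linear_combination h

/-- The core combinatorial lemma, stated inside `ZMod m`. -/
lemma core_lemma (r m : ℕ) (hr : 4 ≤ r) (hm : 2 * r + 1 ≤ m)
    (Tb : Finset (ZMod m)) (hcard : Tb.card = r)
    (hzs : ∀ U ⊆ Tb, U.Nonempty → U.sum id ≠ 0) :
    2 * r + 1 ≤ (Tb.powerset.image (fun U => U.sum id)).card := by
  classical
  haveI : NeZero m := ⟨by omega⟩
  set S : Finset (ZMod m) := Tb.powerset.image (fun U => U.sum id) with hS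
  have hmemS : ∀ U ⊆ Tb, U.sum id ∈ S := by
    intro U hU
    exact mem_image.2 ⟨U, mem_powerset.2 hU, rfl⟩
  set s : ZMod m := Tb.sum id with hs
  have hTbne : Tb.Nonempty := by
    rw [← Finset.card_pos, hcard]; omega
  -- zero-sum-free consequences
  have hz1 : ∀ t ∈ Tb, t ≠ 0 := by
    intro t ht h0
    exact hzs {t} (by simpa using ht) ⟨t, by simp⟩ (by simp [h0])
  have hzT : s ≠ 0 := hzs Tb le_rfl hTbne
  have hz2 : ∀ u ∈ Tb, ∀ v ∈ Tb, u ≠ v → u + v ≠ 0 := by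
    intro u hu v hv huv h0
    refine hzs {u, v} ?_ ⟨u, by simp⟩ ?_
    · intro x hx; rcases mem_insert.1 hx with rfl | hx
      · exact hu
      · rcases mem_singleton.1 hx with rfl; exact hv
    · rw [Finset.sum_pair huv]; exact h0
  have hzE1 : ∀ t ∈ Tb, s - t ≠ 0 := by
    intro t ht h0
    refine hzs (Tb.erase t) (erase_subset _ _) ?_ ?_
    · rw [← Finset.card_pos, card_erase_of_mem ht, hcard]; omega
    · rw [sum_erase_zmod Tb t ht]; exact h0
  have hzE2 : ∀ u ∈ Tb, ∀ v ∈ Tb, u ≠ v → s - u - v ≠ 0 := by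
    intro u hu v hv huv h0
    have hv' : v ∈ Tb.erase u := mem_erase.2 ⟨fun h => huv h.symm, hv⟩
    refine hzs ((Tb.erase u).erase v) ((erase_subset _ _).trans (erase_subset _ _)) ?_ ?_
    · rw [← Finset.card_pos, card_erase_of_mem hv', card_erase_of_mem hu, hcard]; omega
    · rw [sum_erase_zmod _ v hv', sum_erase_zmod Tb u hu]; exact h0
  have hzE3 : ∀ u ∈ Tb, ∀ v ∈ Tb, ∀ w ∈ Tb, u ≠ v → u ≠ w → v ≠ w →
      s - u - v - w ≠ 0 := by
    intro u hu v hv w hw huv huw hvw h0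
    have hv' : v ∈ Tb.erase u := mem_erase.2 ⟨fun h => huv h.symm, hv⟩
    have hw' : w ∈ (Tb.erase u).erase v :=
      mem_erase.2 ⟨fun h => hvw h.symm, mem_erase.2 ⟨fun h => huw h.symm, hw⟩⟩
    refine hzs (((Tb.erase u).erase v).erase w)
      (((erase_subset _ _).trans (erase_subset _ _)).trans (erase_subset _ _)) ?_ ?_
    · rw [← Finset.card_pos, card_erase_of_mem hw', card_erase_of_mem hv',
        card_erase_of_mem hu, hcard]; omega
    · rw [sum_erase_zmod _ w hw', sum_erase_zmod _ v hv', sum_erase_zmod Tb u hu]; exact h0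
  -- the sets A and B
  have h0Tb : (0 : ZMod m) ∉ Tb := fun h => hz1 0 h rfl
  set A : Finset (ZMod m) := insert 0 Tb with hA
  set B : Finset (ZMod m) := A.image (fun x => s - x) with hB
  have hAcard : A.card = r + 1 := by
    rw [hA, card_insert_of_notMem h0Tb, hcard]
  have hBcard : B.card = r + 1 := by
    rw [hB, card_image_of_injective _ sub_right_injective, hAcard]
  have hAS : A ⊆ S := by
    intro x hx
    rcases mem_insert.1 hx with rfl | hx
    · have := hmemS ∅ (empty_subset _); simpa using this
    · have := hmemS {x} (by simpa using hx); simpa using this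
  have hBS : B ⊆ S := by
    intro x hx
    obtain ⟨y, hy, rfl⟩ := mem_image.1 hx
    rcases mem_insert.1 hy with rfl | hy
    · have := hmemS Tb le_rfl; simpa [hs] using this
    · have := hmemS (Tb.erase y) (erase_subset _ _)
      rwa [sum_erase_zmod Tb y hy] at this
  have hABsub : ∀ x ∈ A ∩ B, x ∈ Tb ∧ x + x = s := by
    intro x hx
    obtain ⟨hxA, hxB⟩ := mem_inter.1 hx
    obtain ⟨y, hy, hxy⟩ := mem_image.1 hxB
    rcases mem_insert.1 hxA with rfl | hxT
    · rcases mem_insert.1 hy with rfl | hyT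
      · exact absurd (by linear_combination hxy) hzT
      · exact absurd (by linear_combination hxy) (hzE1 y hyT)
    · rcases mem_insert.1 hy with rfl | hyT
      · exact absurd (by linear_combination hxy) (hzE1 x hxT)
      · by_cases hxy2 : x = y
        · exact ⟨hxT, by rw [hxy2] at hxy ⊢; linear_combination -hxy⟩
        · exact absurd (by linear_combination hxy) (hzE2 x hxT y hyT hxy2)
  have hABcard : (A ∩ B).card ≤ 2 := by
    by_contra hc
    push_neg at hc
    obtain ⟨u, v, w, hu, hv, hw, huv, huw, hvw⟩ := Finset.two_lt_card_iff.1 hc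
    obtain ⟨huT, hus⟩ := hABsub u hu
    obtain ⟨hvT, hvs⟩ := hABsub v hv
    obtain ⟨hwT, hws⟩ := hABsub w hw
    have h1 : (u - v) + (u - v) = 0 := by linear_combination hus - hvs
    have h2 : (u - w) + (u - w) = 0 := by linear_combination hus - hws
    have := two_torsion_unique (u - v) (u - w) (sub_ne_zero.2 huv) (sub_ne_zero.2 huw) h1 h2
    exact hvw (by linear_combination -this)
  have hUnion : (A ∪ B).card + (A ∩ B).card = 2 * r + 2 := by
    rw [Finset.card_union_add_card_inter, hAcard, hBcard]; ring
  have hUS : A ∪ B ⊆ S := union_subset hAS hBS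
  by_cases hsmall : (A ∩ B).card ≤ 1
  · calc 2 * r + 1 ≤ (A ∪ B).card := by omega
    _ ≤ S.card := card_le_card hUS
  -- rigid case
  push_neg at hsmall
  obtain ⟨a, b, ha, hb, hab⟩ := Finset.one_lt_card_iff.1 hsmall
  obtain ⟨haT, has⟩ := hABsub a ha
  obtain ⟨hbT, hbs⟩ := hABsub b hb
  set h : ZMod m := b - a with hh_def
  have hh2 : h + h = 0 := by linear_combination hbs - has
  have hh0 : h ≠ 0 := sub_ne_zero.2 (Ne.symm hab)
  have hbeq : b = a + h := by rw [hh_def]; ring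
  by_contra hbad
  push_neg at hbad
  -- no escape
  have hne : ∀ U ⊆ Tb, U.sum id ∈ A ∪ B := by
    intro U hU
    by_contra hx
    have hins : insert (U.sum id) (A ∪ B) ⊆ S :=
      insert_subset (hmemS U hU) hUS
    have := card_le_card hins
    rw [card_insert_of_notMem hx] at this
    omega
  have hmemAB : ∀ x ∈ A ∪ B, x = 0 ∨ x ∈ Tb ∨ x = s ∨ ∃ t ∈ Tb, x = s - t := by
    intro x hx
    rcases mem_union.1 hx with hx | hx
    · rcases mem_insert.1 hx with rfl | hx
      · exact Or.inl rfl
      · exact Or.inr (Or.inl hx)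
    · obtain ⟨y, hy, rfl⟩ := mem_image.1 hx
      rcases mem_insert.1 hy with rfl | hy
      · exact Or.inr (Or.inr (Or.inl (by ring)))
      · exact Or.inr (Or.inr (Or.inr ⟨y, hy, rfl⟩))
  have hpair : ∀ u ∈ Tb, ∀ v ∈ Tb, u ≠ v → u + v ∈ A ∪ B := by
    intro u hu v hv huv
    have hsum : ({u, v} : Finset (ZMod m)).sum id = u + v := Finset.sum_pair huv
    have hsub : ({u, v} : Finset (ZMod m)) ⊆ Tb := by
      intro x hx
      rcases mem_insert.1 hx with rfl | hx
      · exact hu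
      · rw [mem_singleton.1 hx]; exact hv
    rw [← hsum]; exact hne _ hsub
  -- Lemma A
  have lemA : ∀ e ∈ Tb, e ≠ a → e ≠ b → (a + e ∈ Tb ∨ e + e = a) := by
    intro e he hea heb
    have hx := hmemAB _ (hpair a haT e he (fun hq => hea hq.symm))
    rcases hx with h0 | hT | hs' | ⟨t, ht, hts⟩
    · exact absurd h0 (hz2 a haT e he (fun hq => hea hq.symm))
    · exact Or.inl hT
    · exact absurd (by linear_combination hs' - has) hea
    · by_cases hta : t = a
      · exact absurd (by rw [hta] at hts; linear_combination hts - has) (hz1 e he)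
      · by_cases htb : t = b
        · refine Or.inl ?_
          have hq : a + e = b := by rw [htb] at hts; linear_combination hts - hbs
          rw [hq]; exact hbT
        · by_cases hte : t = e
          · exact Or.inr (by rw [hte] at hts; linear_combination hts - has)
          · exact absurd (by linear_combination -hts)
              (hzE3 a haT e he t ht (fun hq => hea hq.symm) (fun hq => hta hq.symm)
                (fun hq => hte hq.symm))
  -- the rail: elements j*a + h for 2 ≤ j
  have rel0 : ∀ J, 2 ≤ J → (∀ i : ℕ, 2 ≤ i → i ≤ J → ((i : ZMod m) * a + h ∈ Tb)) →
      ∀ k : ℕ, 1 ≤ k → k ≤ 2 * J - 1 → ((k : ZMod m) * a ≠ 0) := by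
    intro J hJ hrails k
    induction k using Nat.strong_induction_on with
    | _ k IH =>
      intro hk1 hk2 hk0
      match k, hk1 with
      | 1, _ =>
        exact hz1 a haT (by push_cast at hk0; linear_combination hk0)
      | 2, _ =>
        exact hzT (by push_cast at hk0; linear_combination hk0 - has)
      | 3, _ =>
        have ht : ((2 : ZMod m) * a + h) ∈ Tb := by
          have := hrails 2 le_rfl hJ; push_cast at this; exact this
        have hbt : b ≠ (2 : ZMod m) * a + h := by
          intro hq
          exact hz1 a haT (by linear_combination hbeq - hq)
        refine hz2 b hbT _ ht hbt ?_
        push_cast at hk0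
        linear_combination hk0 + hbeq + hh2
      | (k+4), _ =>
        rcases Nat.lt_or_ge (k+4) (J+2) with hlt | hge
        · -- use {b, (k+3)*a + h}
          have ht : (((k+3 : ℕ) : ZMod m) * a + h) ∈ Tb :=
            hrails (k+3) (by omega) (by omega)
          have hbt : b ≠ ((k+3 : ℕ) : ZMod m) * a + h := by
            intro hq
            refine IH (k+2) (by omega) (by omega) (by omega) ?_
            push_cast at hq ⊢
            linear_combination hbeq - hq
          refine hz2 b hbT _ ht hbt ?_
          push_cast at hk0 ⊢
          linear_combination hk0 + hbeq + hh2
        · -- use {J*a + h, (k+4-J)*a + h}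
          have h1 : ((J : ZMod m) * a + h) ∈ Tb := hrails J hJ le_rfl
          have h2 : (((k+4-J : ℕ) : ZMod m) * a + h) ∈ Tb :=
            hrails (k+4-J) (by omega) (by omega)
          have hne12 : (J : ZMod m) * a + h ≠ ((k+4-J : ℕ) : ZMod m) * a + h := by
            intro hq
            refine IH (2*J - (k+4)) (by omega) (by omega) (by omega) ?_
            have hc : ((2*J - (k+4) : ℕ) : ZMod m) = 2 * (J : ZMod m) - ((k+4 : ℕ) : ZMod m) := by
              push_cast [Nat.cast_sub (by omega : k + 4 ≤ 2 * J)]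
              ring
            have hc2 : ((k+4-J : ℕ) : ZMod m) = ((k+4 : ℕ) : ZMod m) - (J : ZMod m) := by
              push_cast [Nat.cast_sub (by omega : J ≤ k + 4)]
              ring
            rw [hc]
            rw [hc2] at hq
            push_cast at hq ⊢
            linear_combination hq
          refine hz2 _ h1 _ h2 hne12 ?_
          have hc2 : ((k+4-J : ℕ) : ZMod m) = ((k+4 : ℕ) : ZMod m) - (J : ZMod m) := by
            push_cast [Nat.cast_sub (by omega : J ≤ k + 4)]
            ring
          rw [hc2]
          push_cast at hk0 ⊢
          linear_combination hk0 + hh2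
  have relh : ∀ J, 2 ≤ J → (∀ i : ℕ, 2 ≤ i → i ≤ J → ((i : ZMod m) * a + h ∈ Tb)) →
      ∀ k : ℕ, k ≤ J + 1 → ((k : ZMod m) * a ≠ h) := by
    intro J hJ hrails k
    induction k using Nat.strong_induction_on with
    | _ k IH =>
      intro hk2 hk0
      match k with
      | 0 =>
        exact hh0 (by push_cast at hk0; linear_combination -hk0)
      | 1 =>
        refine hzE1 b hbT ?_
        push_cast at hk0
        linear_combination hk0 - hbeq - has
      | 2 =>
        have ht : ((2 : ZMod m) * a + h) ∈ Tb := by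
          have := hrails 2 le_rfl hJ; push_cast at this; exact this
        refine hz1 _ ht ?_
        push_cast at hk0
        linear_combination hk0 + hh2
      | (k+3) =>
        have ht : (((k+2 : ℕ) : ZMod m) * a + h) ∈ Tb :=
          hrails (k+2) (by omega) (by omega)
        have hat : a ≠ ((k+2 : ℕ) : ZMod m) * a + h := by
          intro hq
          refine IH (k+1) (by omega) (by omega) ?_
          push_cast at hq ⊢
          linear_combination -hq - hh2
        refine hz2 a haT _ ht hat ?_
        push_cast at hk0 ⊢
        linear_combination hk0 + hh2
  -- all rails exist
  have railall : ∀ i : ℕ, 2 ≤ i → ((i : ZMod m) * a + h ∈ Tb) := by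
    have main : ∀ j : ℕ, ∀ i : ℕ, 2 ≤ i → i ≤ j → ((i : ZMod m) * a + h ∈ Tb) := by
      intro j
      induction j with
      | zero => intro i h1 h2; omega
      | succ n IH =>
        intro i h1 h2
        rcases Nat.lt_or_ge i (n+1) with hlt | hge
        · exact IH i h1 (by omega)
        · have hi : i = n + 1 := by omega
          subst hi
          by_cases h2case : n + 1 = 2
          · -- base: rail 2 comes from a + b
            rw [h2case]
            have hx := hmemAB _ (hpair a haT b hbT hab)
            rcases hx with h0 | hT | hs' | ⟨t, ht, hts⟩
            · exact absurd h0 (hz2 a haT b hbT hab)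
            · have hq : ((2:ℕ) : ZMod m) * a + h = a + b := by
                push_cast
                linear_combination hbeq
              rw [hq]; exact hT
            · exact absurd (by linear_combination -hs') (hzE2 a haT b hbT hab)
            · by_cases hta : t = a
              · refine absurd ?_ (hz1 b hbT)
                rw [hta] at hts
                linear_combination hts - has
              · by_cases htb : t = b
                · refine absurd ?_ (hz1 a haT)
                  rw [htb] at hts
                  linear_combination hts - hbs
                · exact absurd (by linear_combination -hts)
                    (hzE3 a haT b hbT t ht hab (fun hq => hta hq.symm) (fun hq => htb hq.symm))
          · -- step: from rail n to rail (n+1)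
            have hn2 : 2 ≤ n := by omega
            have ht : ((n : ZMod m) * a + h) ∈ Tb := IH n hn2 le_rfl
            have hea : (n : ZMod m) * a + h ≠ a := by
              intro hq
              refine relh n hn2 IH (n-1) (by omega) ?_
              have hc : ((n - 1 : ℕ) : ZMod m) = (n : ZMod m) - 1 := by
                push_cast [Nat.cast_sub (by omega : 1 ≤ n)]; ring
              rw [hc]
              linear_combination hq - hh2
            have heb : (n : ZMod m) * a + h ≠ b := by
              intro hq
              refine rel0 n hn2 IH (n-1) (by omega) (by omega) ?_
              have hc : ((n - 1 : ℕ) : ZMod m) = (n : ZMod m) - 1 := by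
                push_cast [Nat.cast_sub (by omega : 1 ≤ n)]; ring
              rw [hc]
              linear_combination hq - hbeq
            rcases lemA _ ht hea heb with hT | hdbl
            · have hq : ((n + 1 : ℕ) : ZMod m) * a + h = a + ((n : ZMod m) * a + h) := by
                push_cast; ring
              rw [hq]; exact hT
            · exfalso
              refine rel0 n hn2 IH (2*n - 1) (by omega) (by omega) ?_
              have hc : ((2*n - 1 : ℕ) : ZMod m) = 2 * (n : ZMod m) - 1 := by
                push_cast [Nat.cast_sub (by omega : 1 ≤ 2*n)]; ring
              rw [hc]
              linear_combination hdbl - hh2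
    intro i hi; exact main i i hi le_rfl
  -- final counting: a, b = 1*a+h, and j*a+h for 2 ≤ j ≤ r are r+1 distinct elements of Tb
  have hrailsr : ∀ i : ℕ, 2 ≤ i → i ≤ r → ((i : ZMod m) * a + h ∈ Tb) :=
    fun i h1 _ => railall i h1
  have hr2 : 2 ≤ r := by omega
  set N : Finset (ZMod m) :=
    insert a ((Finset.Icc 1 r).image (fun j : ℕ => (j : ZMod m) * a + h)) with hN
  have hNsub : N ⊆ Tb := by
    intro x hx
    rcases mem_insert.1 hx with rfl | hx
    · exact haT
    · obtain ⟨j, hj, rfl⟩ := mem_image.1 hx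
      rw [mem_Icc] at hj
      rcases Nat.lt_or_ge j 2 with hj2 | hj2
      · have hj1 : j = 1 := by omega
        subst hj1
        have hq : ((1:ℕ) : ZMod m) * a + h = b := by push_cast; linear_combination -hbeq
        rw [hq]; exact hbT
      · exact railall j hj2
  have hinj : Set.InjOn (fun j : ℕ => (j : ZMod m) * a + h) (Finset.Icc 1 r) := by
    intro j hj j' hj' hq
    simp only [coe_Icc, Set.mem_Icc] at hj hj'
    by_contra hne'
    rcases Nat.lt_or_ge j j' with hlt | hge
    · refine rel0 r hr2 hrailsr (j' - j) (by omega) (by omega) ?_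
      have hc : ((j' - j : ℕ) : ZMod m) = (j' : ZMod m) - (j : ZMod m) := by
        push_cast [Nat.cast_sub (by omega : j ≤ j')]; ring
      rw [hc]
      simp only at hq
      linear_combination -hq
    · have hlt : j' < j := by omega
      refine rel0 r hr2 hrailsr (j - j') (by omega) (by omega) ?_
      have hc : ((j - j' : ℕ) : ZMod m) = (j : ZMod m) - (j' : ZMod m) := by
        push_cast [Nat.cast_sub (by omega : j' ≤ j)]; ring
      rw [hc]
      simp only at hq
      linear_combination hq
  have haN : a ∉ (Finset.Icc 1 r).image (fun j : ℕ => (j : ZMod m) * a + h) := by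
    intro hx
    obtain ⟨j, hj, hq⟩ := mem_image.1 hx
    rw [mem_Icc] at hj
    rcases Nat.lt_or_ge j 2 with hj2 | hj2
    · have hj1 : j = 1 := by omega
      subst hj1
      refine hab ?_
      push_cast at hq
      linear_combination -hq - hbeq
    · refine relh r hr2 hrailsr (j - 1) (by omega) ?_
      have hc : ((j - 1 : ℕ) : ZMod m) = (j : ZMod m) - 1 := by
        push_cast [Nat.cast_sub (by omega : 1 ≤ j)]; ring
      rw [hc]
      linear_combination hq - hh2
  have hNcard : N.card = r + 1 := by
    rw [hN, card_insert_of_notMem haN, Finset.card_image_of_injOn hinj, Nat.card_Icc]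
    omega
  have := card_le_card hNsub
  rw [hNcard, hcard] at this
  omega




/-- For `r ≥ 4`, `m ≥ 2r + 1`, an admissible `r`-element set `T ⊆ {1,…,m−1}` has
subset sums representing at least `2r + 1` residue classes mod `m`. -/
theorem stmt_19 (r m : ℕ) (hr : 4 ≤ r) (hm : 2 * r + 1 ≤ m)
    (T : Finset ℕ) (hT : Admissible m T) (hcard : T.card = r) :
    2 * r + 1 ≤ diversity m T := by
  classical
  haveI : NeZero m := ⟨by omega⟩
  obtain ⟨hTsub, hTzs⟩ := hT
  have hlt : ∀ t ∈ T, 0 < t ∧ t < m := by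
    intro t ht
    have := hTsub ht
    rw [Finset.mem_Icc] at this
    omega
  have hinj : Set.InjOn (fun n : ℕ => (n : ZMod m)) T := by
    intro x hx y hy hxy
    have hx' := (hlt x hx).2
    have hy' := (hlt y hy).2
    have hv : (x : ZMod m).val = (y : ZMod m).val := by
      simp only at hxy
      rw [hxy]
    rwa [ZMod.val_cast_of_lt hx', ZMod.val_cast_of_lt hy'] at hv
  set Tb : Finset (ZMod m) := T.image (fun n : ℕ => (n : ZMod m)) with hTb
  have hTbcard : Tb.card = r := by rw [hTb, Finset.card_image_of_injOn hinj, hcard]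
  have hrep : ∀ U ⊆ Tb, ∃ V, V ⊆ T ∧ V.image (fun n : ℕ => (n : ZMod m)) = U ∧
      U.sum id = ((V.sum id : ℕ) : ZMod m) := by
    intro U hU
    have hVim : (T.filter (fun n : ℕ => (↑n : ZMod m) ∈ U)).image (fun n : ℕ => (n : ZMod m)) = U := by
      apply Finset.Subset.antisymm
      · intro x hx
        obtain ⟨n, hn, rfl⟩ := Finset.mem_image.1 hx
        exact (Finset.mem_filter.1 hn).2
      · intro u hu
        have hu' : u ∈ Tb := hU hu
        rw [hTb] at hu'
        obtain ⟨n, hn, rfl⟩ := Finset.mem_image.1 hu'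
        exact Finset.mem_image.2 ⟨n, Finset.mem_filter.2 ⟨hn, hu⟩, rfl⟩
    refine ⟨T.filter (fun n : ℕ => (↑n : ZMod m) ∈ U), Finset.filter_subset _ _, hVim, ?_⟩
    conv_lhs => rw [← hVim]
    rw [Finset.sum_image
      (fun x hx y hy => hinj (Finset.filter_subset _ _ hx) (Finset.filter_subset _ _ hy))]
    rw [Nat.cast_sum]
    rfl
  have hzs : ∀ U ⊆ Tb, U.Nonempty → U.sum id ≠ 0 := by
    intro U hU hUne h0
    obtain ⟨V, hVsub, hVim, hVsum⟩ := hrep U hU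
    have hVne : V.Nonempty := by
      obtain ⟨u, hu⟩ := hUne
      rw [← hVim] at hu
      obtain ⟨n, hn, -⟩ := Finset.mem_image.1 hu
      exact ⟨n, hn⟩
    rw [hVsum, ZMod.natCast_eq_zero_iff] at h0
    exact hTzs V hVsub hVne h0
  have hcore := core_lemma r m hr hm Tb hTbcard hzs
  have himg : Tb.powerset.image (fun U => U.sum id)
      ⊆ (T.powerset.image (fun U => U.sum id % m)).image (fun n : ℕ => (n : ZMod m)) := by
    intro x hx
    obtain ⟨U, hU, rfl⟩ := Finset.mem_image.1 hx
    rw [Finset.mem_powerset] at hU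
    obtain ⟨V, hVsub, hVim, hVsum⟩ := hrep U hU
    refine Finset.mem_image.2 ⟨V.sum id % m, ?_, ?_⟩
    · exact Finset.mem_image.2 ⟨V, Finset.mem_powerset.2 hVsub, rfl⟩
    · rw [ZMod.natCast_mod, ← hVsum]
  calc 2 * r + 1 ≤ (Tb.powerset.image (fun U => U.sum id)).card := hcore
    _ ≤ ((T.powerset.image (fun U => U.sum id % m)).image (fun n : ℕ => (n : ZMod m))).card :=
        Finset.card_le_card himg
    _ ≤ (T.powerset.image (fun U => U.sum id % m)).card := Finset.card_image_le
    _ = diversity m T := rfl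
end
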